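/- arXiv:0910.2788 — 4 statements merged into one kernel-verified Lean document; each statement's English description precedes it below -/
import Mathlib

section
/- Optimality criterium: for a stopping time θ* ∈ T_S with E[φ(θ*)] < ∞, the following are equivalent: (1) v(S) = E[φ(θ*)|F_S] a.s.; (2) v(θ*) = φ(θ*) a.s. and E[v(S)] = E[v(θ*)]; (3) E[v(S)] = E[φ(θ*)]. -/
open MeasureTheory Filter ENNReal

variable {Ω : Type*}

/-- A stopping time of the filtration `ℱ` with values in `[0, T]` (an element of `T_0`). -/
def IsStoppingTimeIn {m : MeasurableSpace Ω} (ℱ : Filtration ℝ m) (T : ℝ)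
    (τ : Ω → ℝ) : Prop :=
  IsStoppingTime ℱ (fun ω => (τ ω : WithTop ℝ)) ∧ ∀ ω, τ ω ∈ Set.Icc (0 : ℝ) T

/-- `θ` belongs to `T_S`: a `[0,T]`-valued stopping time with `θ ≥ S` a.s. -/
def MemTS {m : MeasurableSpace Ω} (ℱ : Filtration ℝ m) (μ : Measure Ω) (T : ℝ)
    (S θ : Ω → ℝ) : Prop :=
  IsStoppingTimeIn ℱ T θ ∧ ∀ᵐ ω ∂μ, S ω ≤ θ ω

/-- An admissible family of nonnegative random variables indexed by stopping times:
`φ(τ)` is `F_τ`-measurable and `φ(τ) = φ(τ')` a.s. on `{τ = τ'}`. -/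
def Admissible {m : MeasurableSpace Ω} (ℱ : Filtration ℝ m) (μ : Measure Ω) (T : ℝ)
    (φ : (Ω → ℝ) → Ω → ℝ) : Prop :=
  (∀ τ (hτ : IsStoppingTimeIn ℱ T τ),
      Measurable[hτ.1.measurableSpace] (φ τ) ∧ ∀ ω, 0 ≤ φ τ ω) ∧
  (∀ τ τ', IsStoppingTimeIn ℱ T τ → IsStoppingTimeIn ℱ T τ' →
      ∀ᵐ ω ∂μ, τ ω = τ' ω → φ τ ω = φ τ' ω)

/-- `v` is an essential supremum of the family of random variables `s`:
`v` dominates every member a.s., and is a.s. below any other a.s. upper bound. -/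
def IsEssSupOf {m : MeasurableSpace Ω} (μ : Measure Ω) (s : Set (Ω → ℝ))
    (v : Ω → ℝ) : Prop :=
  (∀ f ∈ s, f ≤ᵐ[μ] v) ∧ ∀ g : Ω → ℝ, (∀ f ∈ s, f ≤ᵐ[μ] g) → v ≤ᵐ[μ] g

/-- The family `{E[φ(θ) | F_S] : θ ∈ T_S}`. -/
def valueSet {m : MeasurableSpace Ω} (ℱ : Filtration ℝ m) (μ : Measure Ω) (T : ℝ)
    (φ : (Ω → ℝ) → Ω → ℝ) (S : Ω → ℝ) (hS : IsStoppingTime ℱ (fun ω => (S ω : WithTop ℝ))) : Set (Ω → ℝ) :=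
  {f | ∃ θ, MemTS ℱ μ T S θ ∧ f = μ[φ θ | hS.measurableSpace]}

/-- `v` is the value function family of the reward family `φ`:
`v(S) = ess sup_{θ ∈ T_S} E[φ(θ) | F_S]`, chosen `F_S`-measurable. -/
def IsValueFam {m : MeasurableSpace Ω} (ℱ : Filtration ℝ m) (μ : Measure Ω) (T : ℝ)
    (φ v : (Ω → ℝ) → Ω → ℝ) : Prop :=
  ∀ S (hS : IsStoppingTimeIn ℱ T S),
    Measurable[hS.1.measurableSpace] (v S) ∧
    IsEssSupOf μ (valueSet ℱ μ T φ S hS.1) (v S)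

/-- Right continuity in expectation along stopping times. -/
def RCEFam {m : MeasurableSpace Ω} (ℱ : Filtration ℝ m) (μ : Measure Ω) (T : ℝ)
    (φ : (Ω → ℝ) → Ω → ℝ) : Prop :=
  ∀ θ (θn : ℕ → Ω → ℝ), IsStoppingTimeIn ℱ T θ →
    (∀ n, IsStoppingTimeIn ℱ T (θn n)) →
    (∀ᵐ ω ∂μ, Antitone (fun n => θn n ω) ∧
      Tendsto (fun n => θn n ω) atTop (nhds (θ ω))) →
    Tendsto (fun n => ∫ ω, φ (θn n) ω ∂μ) atTop (nhds (∫ ω, φ θ ω ∂μ))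

/-- Left continuity in expectation along stopping times. -/
def LCEFam {m : MeasurableSpace Ω} (ℱ : Filtration ℝ m) (μ : Measure Ω) (T : ℝ)
    (φ : (Ω → ℝ) → Ω → ℝ) : Prop :=
  ∀ θ (θn : ℕ → Ω → ℝ), IsStoppingTimeIn ℱ T θ →
    (∀ n, IsStoppingTimeIn ℱ T (θn n)) →
    (∀ᵐ ω ∂μ, Monotone (fun n => θn n ω) ∧
      Tendsto (fun n => θn n ω) atTop (nhds (θ ω))) →
    Tendsto (fun n => ∫ ω, φ (θn n) ω ∂μ) atTop (nhds (∫ ω, φ θ ω ∂μ))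

/-- The integrability condition `v(0) = sup_{θ ∈ T_0} E[φ(θ)] < ∞`. -/
def BddReward {m : MeasurableSpace Ω} (ℱ : Filtration ℝ m) (μ : Measure Ω) (T : ℝ)
    (φ : (Ω → ℝ) → Ω → ℝ) : Prop :=
  (⨆ θ : {θ : Ω → ℝ // IsStoppingTimeIn ℱ T θ},
      ∫⁻ ω, ENNReal.ofReal (φ θ.1 ω) ∂μ) < ⊤

/-- A supermartingale system: an admissible family `h` with
`E[h(θ) | F_{θ'}] ≤ h(θ')` a.s. whenever `θ ≥ θ'` a.s. -/
def SupermartSys {m : MeasurableSpace Ω} (ℱ : Filtration ℝ m) (μ : Measure Ω) (T : ℝ)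
    (h : (Ω → ℝ) → Ω → ℝ) : Prop :=
  Admissible ℱ μ T h ∧
  ∀ θ θ' (hθ : IsStoppingTimeIn ℱ T θ) (hθ' : IsStoppingTimeIn ℱ T θ'),
    (∀ᵐ ω ∂μ, θ' ω ≤ θ ω) →
    μ[h θ | hθ'.1.measurableSpace] ≤ᵐ[μ] h θ'

/-- `F_0` contains only sets of probability `0` or `1`. -/
def TrivialF0 {m : MeasurableSpace Ω} (ℱ : Filtration ℝ m) (μ : Measure Ω) : Prop :=
  ∀ A : Set Ω, MeasurableSet[ℱ 0] A → μ A = 0 ∨ μ A = 1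

section Aux

variable {m : MeasurableSpace Ω} {ℱ : Filtration ℝ m} {μ : Measure Ω} {T : ℝ}
  {φ v : (Ω → ℝ) → Ω → ℝ}

/-- A function measurable w.r.t. a μ-trivial σ-algebra is a.e. constant. -/
lemma ae_eq_const_of_trivial [IsProbabilityMeasure μ] {m0 : MeasurableSpace Ω}
    (hm0 : m0 ≤ m)
    (htriv : ∀ A : Set Ω, MeasurableSet[m0] A → μ A = 0 ∨ μ A = 1)
    {f : Ω → ℝ} (hf : Measurable[m0] f) : ∃ c : ℝ, f =ᵐ[μ] fun _ => c := by
  have hE : ∀ x : ℝ, MeasurableSet[m0] {ω | f ω ≤ x} := fun x => hf measurableSet_Iic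
  have hEm : ∀ x : ℝ, MeasurableSet[m] {ω | f ω ≤ x} := fun x => hm0 _ (hE x)
  have h01 : ∀ x : ℝ, μ {ω | f ω ≤ x} = 0 ∨ μ {ω | f ω ≤ x} = 1 := fun x => htriv _ (hE x)
  have hex1 : ∃ x : ℝ, μ {ω | f ω ≤ x} = 1 := by
    by_contra h
    push_neg at h
    have h0 : ∀ n : ℕ, μ {ω | f ω ≤ (n : ℝ)} = 0 := fun n => (h01 n).resolve_right (h n)
    have hsub : (Set.univ : Set Ω) ⊆ ⋃ n : ℕ, {ω | f ω ≤ (n : ℝ)} := by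
      intro ω _
      obtain ⟨n, hn⟩ := exists_nat_ge (f ω)
      exact Set.mem_iUnion.2 ⟨n, hn⟩
    have hle := (measure_mono hsub).trans (measure_iUnion_le (μ := μ) fun n : ℕ => {ω | f ω ≤ (n : ℝ)})
    have : (1 : ℝ≥0∞) ≤ 0 := by simpa [h0, measure_univ] using hle
    simp at this
  have hex0 : ∃ y : ℝ, μ {ω | f ω ≤ y} = 0 := by
    by_contra h
    push_neg at h
    have h1 : ∀ n : ℕ, μ {ω | f ω ≤ -(n : ℝ)} = 1 := fun n => (h01 _).resolve_left (h _)
    have hcompl : ∀ n : ℕ, μ ({ω | f ω ≤ -(n : ℝ)}ᶜ) = 0 := by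
      intro n
      simp [measure_compl (hEm _) (measure_ne_top μ _), h1 n]
    have hint : (⋂ n : ℕ, {ω | f ω ≤ -(n : ℝ)}) = ∅ := by
      ext ω
      simp only [Set.mem_iInter, Set.mem_setOf_eq, Set.mem_empty_iff_false, iff_false, not_forall]
      obtain ⟨n, hn⟩ := exists_nat_gt (-(f ω))
      exact ⟨n, by linarith⟩
    have h2 : μ (⋃ n : ℕ, {ω | f ω ≤ -(n : ℝ)}ᶜ) = 0 := measure_iUnion_null hcompl
    rw [← Set.compl_iInter, hint, Set.compl_empty, measure_univ] at h2
    exact one_ne_zero h2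
  obtain ⟨x1, hx1⟩ := hex1
  obtain ⟨y0, hy0⟩ := hex0
  set Q : Set ℝ := {x | μ {ω | f ω ≤ x} = 1} with hQ
  have hQne : Q.Nonempty := ⟨x1, hx1⟩
  have hQbdd : BddBelow Q := by
    refine ⟨y0, fun x hx => ?_⟩
    by_contra hlt
    push_neg at hlt
    have hmono : μ {ω | f ω ≤ x} ≤ μ {ω | f ω ≤ y0} :=
      measure_mono fun ω h => le_trans h hlt.le
    rw [hx, hy0] at hmono
    simp at hmono
  set c := sInf Q with hc
  have hQmem : ∀ {x : ℝ}, c < x → μ {ω | f ω ≤ x} = 1 := by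
    intro x hx
    obtain ⟨q, hq, hqx⟩ := (csInf_lt_iff hQbdd hQne).1 hx
    refine le_antisymm prob_le_one ?_
    rw [← hq]
    exact measure_mono fun ω h => le_trans h hqx.le
  have hble : μ {ω | f ω ≤ c} = 1 := by
    have hset : {ω | f ω ≤ c} = ⋂ n : ℕ, {ω | f ω ≤ c + ((n : ℝ) + 1)⁻¹} := by
      ext ω
      simp only [Set.mem_setOf_eq, Set.mem_iInter]
      constructor
      · intro h n
        have : (0 : ℝ) < ((n : ℝ) + 1)⁻¹ := by positivity
        linarith
      · intro h
        by_contra hlt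
        push_neg at hlt
        obtain ⟨n, hn⟩ := exists_nat_one_div_lt (show (0 : ℝ) < f ω - c by linarith)
        rw [one_div] at hn
        have := h n
        linarith
    rw [hset]
    have h1 : ∀ n : ℕ, μ ({ω | f ω ≤ c + ((n : ℝ) + 1)⁻¹}ᶜ) = 0 := by
      intro n
      have hmem := hQmem (show c < c + ((n : ℝ) + 1)⁻¹ by
        have : (0 : ℝ) < ((n : ℝ) + 1)⁻¹ := by positivity
        linarith)
      simp [measure_compl (hEm _) (measure_ne_top μ _), hmem]
    have h2 : μ ((⋂ n : ℕ, {ω | f ω ≤ c + ((n : ℝ) + 1)⁻¹})ᶜ) = 0 := by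
      rw [Set.compl_iInter]
      exact measure_iUnion_null h1
    have hmeasI : MeasurableSet[m] (⋂ n : ℕ, {ω | f ω ≤ c + ((n : ℝ) + 1)⁻¹}) :=
      MeasurableSet.iInter fun _ => hEm _
    rwa [prob_compl_eq_zero_iff hmeasI] at h2
  have hlt0 : μ {ω | f ω < c} = 0 := by
    have hset : {ω | f ω < c} = ⋃ n : ℕ, {ω | f ω ≤ c - ((n : ℝ) + 1)⁻¹} := by
      ext ω
      simp only [Set.mem_setOf_eq, Set.mem_iUnion]
      constructor
      · intro h
        obtain ⟨n, hn⟩ := exists_nat_one_div_lt (show (0 : ℝ) < c - f ω by linarith)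
        rw [one_div] at hn
        exact ⟨n, by linarith⟩
      · rintro ⟨n, hn⟩
        have : (0 : ℝ) < ((n : ℝ) + 1)⁻¹ := by positivity
        linarith
    rw [hset]
    refine measure_iUnion_null fun n => ?_
    rcases h01 (c - ((n : ℝ) + 1)⁻¹) with h | h
    · exact h
    · exfalso
      have hle : c ≤ c - ((n : ℝ) + 1)⁻¹ := csInf_le hQbdd h
      have : (0 : ℝ) < ((n : ℝ) + 1)⁻¹ := by positivity
      linarith
  refine ⟨c, ?_⟩
  have hsub : {ω | ¬ f ω = c} ⊆ {ω | f ω < c} ∪ {ω | f ω ≤ c}ᶜ := by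
    intro ω h
    rcases lt_trichotomy (f ω) c with h1 | h1 | h1
    · exact Or.inl h1
    · exact absurd h1 h
    · exact Or.inr (by simpa using h1.not_ge)
  have hcompl : μ ({ω | f ω ≤ c}ᶜ) = 0 := by
    simp [measure_compl (hEm _) (measure_ne_top μ _), hble]
  exact ae_iff.2 (measure_mono_null hsub (measure_union_null hlt0 hcompl))

/-- Uniform bound on expectations of conditional expectations of the reward family,
obtained from the value at time `0` and triviality of `F_0`. -/
lemma integral_condExp_le_bound [IsProbabilityMeasure μ] (hT : 0 < T)
    (hF0 : TrivialF0 ℱ μ) (hφ : Admissible ℱ μ T φ) (hv : IsValueFam ℱ μ T φ v) :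
    ∃ C : ℝ, 0 ≤ C ∧ ∀ θ, IsStoppingTimeIn ℱ T θ →
      ∀ (m' : MeasurableSpace Ω) (hm' : m' ≤ m) (_ : SigmaFinite (μ.trim hm')),
        ∫ ω, (μ[φ θ|m']) ω ∂μ ≤ C := by
  have hS0 : IsStoppingTimeIn ℱ T (fun _ => (0 : ℝ)) :=
    ⟨isStoppingTime_const ℱ 0, fun ω => ⟨le_refl _, hT.le⟩⟩
  have hmeas0 : Measurable[ℱ 0] (v fun _ => (0 : ℝ)) := by
    have h := (hv _ hS0).1
    rwa [show hS0.1.measurableSpace = ℱ 0 from IsStoppingTime.measurableSpace_const ℱ 0] at h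
  obtain ⟨c, hcae⟩ := ae_eq_const_of_trivial (ℱ.le 0) hF0 hmeas0
  refine ⟨max c 0, le_max_right _ _, ?_⟩
  intro θ hθ m' hm' hsf
  by_cases hi : Integrable (φ θ) μ
  · have hmem : (μ[φ θ|hS0.1.measurableSpace]) ∈ valueSet ℱ μ T φ (fun _ => 0) hS0.1 :=
      ⟨θ, ⟨hθ, ae_of_all _ fun ω => (hθ.2 ω).1⟩, rfl⟩
    have hle := (hv _ hS0).2.1 _ hmem
    have h1 : ∫ ω, (μ[φ θ|m']) ω ∂μ = ∫ ω, φ θ ω ∂μ := integral_condExp hm'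
    have h2 : ∫ ω, φ θ ω ∂μ = ∫ ω, (μ[φ θ|hS0.1.measurableSpace]) ω ∂μ :=
      (integral_condExp hS0.1.measurableSpace_le).symm
    have h3 : ∫ ω, (μ[φ θ|hS0.1.measurableSpace]) ω ∂μ ≤ ∫ _ω, c ∂μ :=
      integral_mono_ae integrable_condExp (integrable_const c) (hle.trans hcae.le)
    have h4 : ∫ _ω, c ∂μ = c := by simp
    rw [h1, h2]
    exact (h3.trans h4.le).trans (le_max_left _ _)
  · rw [condExp_of_not_integrable hi]
    simp only [Pi.zero_apply, integral_zero]
    exact le_max_right c 0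

/-- Pasting of two stopping times along a set which is measurable for `F_R`. -/
noncomputable def pasteST (R θ1 θ2 : Ω → ℝ) (A : Set Ω) : Ω → ℝ :=
  fun ω => max (R ω) (A.indicator θ2 ω + Aᶜ.indicator θ1 ω)

lemma pasteST_apply_mem {R θ1 θ2 : Ω → ℝ} {A : Set Ω} {ω : Ω} (h : ω ∈ A) :
    pasteST R θ1 θ2 A ω = max (R ω) (θ2 ω) := by
  simp [pasteST, Set.indicator_of_mem h,
    Set.indicator_of_notMem (Set.notMem_compl_iff.2 h)]

lemma pasteST_apply_not_mem {R θ1 θ2 : Ω → ℝ} {A : Set Ω} {ω : Ω} (h : ω ∉ A) :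
    pasteST R θ1 θ2 A ω = max (R ω) (θ1 ω) := by
  simp [pasteST, Set.indicator_of_notMem h, Set.indicator_of_mem (Set.mem_compl h)]

lemma pasteST_memTS {R θ1 θ2 : Ω → ℝ} (hR : IsStoppingTimeIn ℱ T R)
    (h1 : MemTS ℱ μ T R θ1) (h2 : MemTS ℱ μ T R θ2) {A : Set Ω}
    (hA : MeasurableSet[hR.1.measurableSpace] A) :
    MemTS ℱ μ T R (pasteST R θ1 θ2 A) := by
  refine ⟨⟨?_, ?_⟩, ae_of_all _ fun ω => le_max_left _ _⟩
  · intro t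
    have hset : {ω | ((pasteST R θ1 θ2 A ω : ℝ) : WithTop ℝ) ≤ (t : WithTop ℝ)} =
        ((A ∩ {ω | (R ω : WithTop ℝ) ≤ t}) ∩ {ω | (θ2 ω : WithTop ℝ) ≤ t}) ∪
          ((Aᶜ ∩ {ω | (R ω : WithTop ℝ) ≤ t}) ∩ {ω | (θ1 ω : WithTop ℝ) ≤ t}) := by
      ext ω
      by_cases h : ω ∈ A
      · simp [pasteST_apply_mem h, h, max_le_iff, Set.mem_setOf_eq, and_assoc]
      · simp [pasteST_apply_not_mem h, h, max_le_iff, Set.mem_setOf_eq, and_assoc]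
    rw [hset]
    exact ((((IsStoppingTime.measurableSet hR.1 A).1 hA).2 t).inter (h2.1.1 t)).union
      ((((IsStoppingTime.measurableSet hR.1 Aᶜ).1 hA.compl).2 t).inter (h1.1.1 t))
  · intro ω
    constructor
    · exact le_trans (hR.2 ω).1 (le_max_left _ _)
    · refine max_le (hR.2 ω).2 ?_
      by_cases h : ω ∈ A
      · rw [Set.indicator_of_mem h, Set.indicator_of_notMem (Set.notMem_compl_iff.2 h),
          add_zero]
        exact (h2.1.2 ω).2
      · rw [Set.indicator_of_notMem h, Set.indicator_of_mem (Set.mem_compl h), zero_add]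
        exact (h1.1.2 ω).2

lemma pasteST_phi (hφ : Admissible ℱ μ T φ) {R θ1 θ2 : Ω → ℝ}
    (hR : IsStoppingTimeIn ℱ T R) (h1 : MemTS ℱ μ T R θ1) (h2 : MemTS ℱ μ T R θ2)
    {A : Set Ω} (hA : MeasurableSet[hR.1.measurableSpace] A) :
    φ (pasteST R θ1 θ2 A) =ᵐ[μ] A.indicator (φ θ2) + Aᶜ.indicator (φ θ1) := by
  have hp := pasteST_memTS hR h1 h2 hA
  have e2 := hφ.2 (pasteST R θ1 θ2 A) θ2 hp.1 h2.1
  have e1 := hφ.2 (pasteST R θ1 θ2 A) θ1 hp.1 h1.1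
  filter_upwards [e1, e2, h1.2, h2.2] with ω he1 he2 hr1 hr2
  by_cases h : ω ∈ A
  · have heq : pasteST R θ1 θ2 A ω = θ2 ω := by
      rw [pasteST_apply_mem h]; exact max_eq_right hr2
    simp [Pi.add_apply, Set.indicator_of_mem h,
      Set.indicator_of_notMem (Set.notMem_compl_iff.2 h), he2 heq]
  · have heq : pasteST R θ1 θ2 A ω = θ1 ω := by
      rw [pasteST_apply_not_mem h]; exact max_eq_right hr1
    simp [Pi.add_apply, Set.indicator_of_notMem h,
      Set.indicator_of_mem (Set.mem_compl h), he1 heq]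

lemma pasteST_condexp [IsProbabilityMeasure μ] (hφ : Admissible ℱ μ T φ)
    {R θ1 θ2 : Ω → ℝ} (hR : IsStoppingTimeIn ℱ T R)
    (h1 : MemTS ℱ μ T R θ1) (h2 : MemTS ℱ μ T R θ2)
    (hi1 : Integrable (φ θ1) μ) (hi2 : Integrable (φ θ2) μ)
    {A : Set Ω} (hA : MeasurableSet[hR.1.measurableSpace] A) :
    Integrable (φ (pasteST R θ1 θ2 A)) μ ∧
      μ[φ (pasteST R θ1 θ2 A)|hR.1.measurableSpace] =ᵐ[μ]
        A.indicator (μ[φ θ2|hR.1.measurableSpace]) +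
          Aᶜ.indicator (μ[φ θ1|hR.1.measurableSpace]) := by
  have hm' : hR.1.measurableSpace ≤ m := hR.1.measurableSpace_le
  have hAm : MeasurableSet A := hm' _ hA
  have hint : Integrable (A.indicator (φ θ2) + Aᶜ.indicator (φ θ1)) μ :=
    (hi2.indicator hAm).add (hi1.indicator hAm.compl)
  have hple := pasteST_phi hφ hR h1 h2 hA
  refine ⟨hint.congr hple.symm, ?_⟩
  calc μ[φ (pasteST R θ1 θ2 A)|hR.1.measurableSpace]
      =ᵐ[μ] μ[A.indicator (φ θ2) + Aᶜ.indicator (φ θ1)|hR.1.measurableSpace] :=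
        condExp_congr_ae hple
    _ =ᵐ[μ] μ[A.indicator (φ θ2)|hR.1.measurableSpace] +
        μ[Aᶜ.indicator (φ θ1)|hR.1.measurableSpace] :=
        condExp_add (hi2.indicator hAm) (hi1.indicator hAm.compl) _
    _ =ᵐ[μ] A.indicator (μ[φ θ2|hR.1.measurableSpace]) +
        Aᶜ.indicator (μ[φ θ1|hR.1.measurableSpace]) :=
        EventuallyEq.add (condExp_indicator hi2 hA) (condExp_indicator hi1 hA.compl)

end Aux
section Aux2

variable {m : MeasurableSpace Ω} {ℱ : Filtration ℝ m} {μ : Measure Ω} {T : ℝ}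
  {φ v : (Ω → ℝ) → Ω → ℝ}

/-- There is a sequence `θn ∈ T_R` with integrable rewards whose conditional expectations
increase a.e. to the value `v R`. -/
lemma exists_seq_tendsto_value [IsProbabilityMeasure μ]
    (hφ : Admissible ℱ μ T φ) (hv : IsValueFam ℱ μ T φ v)
    {R θb : Ω → ℝ} (hR : IsStoppingTimeIn ℱ T R)
    (hθb : MemTS ℱ μ T R θb) (hib : Integrable (φ θb) μ) :
    ∃ θn : ℕ → Ω → ℝ, (∀ n, MemTS ℱ μ T R (θn n)) ∧ (∀ n, Integrable (φ (θn n)) μ) ∧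
      (∀ n, (μ[φ (θn n)|hR.1.measurableSpace]) ≤ᵐ[μ] (μ[φ (θn (n + 1))|hR.1.measurableSpace])) ∧
      (∀ n, (0 : Ω → ℝ) ≤ᵐ[μ] μ[φ (θn n)|hR.1.measurableSpace]) ∧
      ∀ᵐ ω ∂μ, Tendsto (fun n => (μ[φ (θn n)|hR.1.measurableSpace]) ω) atTop (nhds (v R ω)) := by
  classical
  have hm' : hR.1.measurableSpace ≤ m := hR.1.measurableSpace_le
  have hφnn : ∀ θ, IsStoppingTimeIn ℱ T θ → ∀ ω, 0 ≤ φ θ ω := fun θ hθ => (hφ.1 θ hθ).2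
  have hcnn : ∀ θ : Ω → ℝ, MemTS ℱ μ T R θ →
      (0 : Ω → ℝ) ≤ᵐ[μ] μ[φ θ|hR.1.measurableSpace] := fun θ hθ =>
    condExp_nonneg (ae_of_all _ (hφnn θ hθ.1))
  have habs : ∀ x : ℝ, |Real.arctan x| ≤ Real.pi / 2 := fun x =>
    abs_le.2 ⟨(Real.neg_pi_div_two_lt_arctan x).le, (Real.arctan_lt_pi_div_two x).le⟩
  set J : (Ω → ℝ) → ℝ := fun g => ∫ ω, Real.arctan (g ω) ∂μ with hJdef
  have harctan_int : ∀ g : Ω → ℝ, AEStronglyMeasurable g μ →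
      Integrable (fun ω => Real.arctan (g ω)) μ := by
    intro g hg
    refine (integrable_const (Real.pi / 2)).mono'
      (Real.continuous_arctan.comp_aestronglyMeasurable hg) ?_
    exact ae_of_all _ fun ω => by rw [Real.norm_eq_abs]; exact habs _
  have hgm : ∀ θ : Ω → ℝ, Measurable (μ[φ θ|hR.1.measurableSpace]) := fun θ =>
    ((stronglyMeasurable_condExp.mono hm').measurable)
  have hmeasc : ∀ θ : Ω → ℝ, AEStronglyMeasurable (μ[φ θ|hR.1.measurableSpace]) μ :=
    fun θ => (hgm θ).aestronglyMeasurable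
  have hJ_le : ∀ θ : Ω → ℝ, J (μ[φ θ|hR.1.measurableSpace]) ≤ Real.pi / 2 := by
    intro θ
    calc J (μ[φ θ|hR.1.measurableSpace]) ≤ ∫ _ω, Real.pi / 2 ∂μ :=
          integral_mono_ae (harctan_int _ (hmeasc θ)) (integrable_const _)
            (ae_of_all _ fun ω => (Real.arctan_lt_pi_div_two _).le)
      _ = Real.pi / 2 := by simp
  have hJ_mono : ∀ {g1 g2 : Ω → ℝ}, AEStronglyMeasurable g1 μ → AEStronglyMeasurable g2 μ →
      g1 ≤ᵐ[μ] g2 → J g1 ≤ J g2 := by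
    intro g1 g2 hm1 hm2 hle
    exact integral_mono_ae (harctan_int _ hm1) (harctan_int _ hm2)
      (hle.mono fun ω h => Real.arctan_strictMono.monotone h)
  set Qs : Set ℝ := (fun θ : Ω → ℝ => J (μ[φ θ|hR.1.measurableSpace])) ''
    {θ | MemTS ℱ μ T R θ} with hQs
  have hQne : Qs.Nonempty := ⟨_, ⟨θb, hθb, rfl⟩⟩
  have hQbdd : BddAbove Qs := ⟨Real.pi / 2, by rintro x ⟨θ, hθ, rfl⟩; exact hJ_le θ⟩
  set sup := sSup Qs with hsup
  have hmem_le : ∀ θ : Ω → ℝ, MemTS ℱ μ T R θ → J (μ[φ θ|hR.1.measurableSpace]) ≤ sup :=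
    fun θ hθ => le_csSup hQbdd ⟨θ, hθ, rfl⟩
  have hsel : ∀ k : ℕ, ∃ θ, MemTS ℱ μ T R θ ∧ Integrable (φ θ) μ ∧
      sup - ((k : ℝ) + 1)⁻¹ < J (μ[φ θ|hR.1.measurableSpace]) := by
    intro k
    have hlt : sup - ((k : ℝ) + 1)⁻¹ < sup := by
      have : (0 : ℝ) < ((k : ℝ) + 1)⁻¹ := by positivity
      linarith
    obtain ⟨x, hx, hxlt⟩ := exists_lt_of_lt_csSup hQne hlt
    obtain ⟨θ, hθ, rfl⟩ := hx
    by_cases hi : Integrable (φ θ) μ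
    · exact ⟨θ, hθ, hi, hxlt⟩
    · refine ⟨θb, hθb, hib, lt_of_lt_of_le hxlt ?_⟩
      show J (μ[φ θ|hR.1.measurableSpace]) ≤ J (μ[φ θb|hR.1.measurableSpace])
      rw [condExp_of_not_integrable hi]
      exact hJ_mono aestronglyMeasurable_const (hmeasc θb) (hcnn θb hθb)
  choose θsel hselM hselI hselJ using hsel
  set A : (Ω → ℝ) → (Ω → ℝ) → Set Ω := fun p q =>
    {ω | (μ[φ p|hR.1.measurableSpace]) ω ≤ (μ[φ q|hR.1.measurableSpace]) ω} with hA
  have hAmeas : ∀ p q, MeasurableSet[hR.1.measurableSpace] (A p q) := fun p q =>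
    measurableSet_le stronglyMeasurable_condExp.measurable stronglyMeasurable_condExp.measurable
  set θn : ℕ → Ω → ℝ := fun n => Nat.rec (θsel 0)
    (fun k prev => pasteST R prev (θsel (k + 1)) (A prev (θsel (k + 1)))) n with hθn
  have hθn_succ : ∀ n, θn (n + 1) =
      pasteST R (θn n) (θsel (n + 1)) (A (θn n) (θsel (n + 1))) := fun n => rfl
  have hInv : ∀ n, MemTS ℱ μ T R (θn n) ∧ Integrable (φ (θn n)) μ := by
    intro n
    induction n with
    | zero => exact ⟨hselM 0, hselI 0⟩
    | succ k ih =>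
      rw [hθn_succ]
      have hp := pasteST_condexp hφ hR ih.1 (hselM (k + 1)) ih.2 (hselI (k + 1)) (A := A (θn k) (θsel (k + 1))) (hAmeas _ _)
      exact ⟨pasteST_memTS hR ih.1 (hselM (k + 1)) (A := A (θn k) (θsel (k + 1))) (hAmeas _ _), hp.1⟩
  set g : ℕ → Ω → ℝ := fun n => μ[φ (θn n)|hR.1.measurableSpace] with hgdef
  have hg_max : ∀ n, g (n + 1) =ᵐ[μ]
      fun ω => max (g n ω) ((μ[φ (θsel (n + 1))|hR.1.measurableSpace]) ω) := by
    intro n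
    have hp := (pasteST_condexp hφ hR (hInv n).1 (hselM (n + 1)) (hInv n).2
      (hselI (n + 1)) (A := A (θn n) (θsel (n + 1))) (hAmeas _ _)).2
    refine hp.trans (ae_of_all _ fun ω => ?_)
    by_cases h : ω ∈ A (θn n) (θsel (n + 1))
    · rw [Pi.add_apply, Set.indicator_of_mem h,
        Set.indicator_of_notMem (Set.notMem_compl_iff.2 h), add_zero]
      exact (max_eq_right h).symm
    · rw [Pi.add_apply, Set.indicator_of_notMem h,
        Set.indicator_of_mem (Set.mem_compl h), zero_add]
      exact (max_eq_left (le_of_not_ge h)).symm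
  have hg_mono : ∀ n, g n ≤ᵐ[μ] g (n + 1) := fun n =>
    (EventuallyLE.trans (ae_of_all _ fun ω => le_max_left _ _) (hg_max n).symm.le)
  have hgJ : ∀ n : ℕ, sup - ((n : ℝ) + 1)⁻¹ < J (g n) := by
    intro n
    induction n with
    | zero => exact hselJ 0
    | succ k _ih =>
      have h1 : J (μ[φ (θsel (k + 1))|hR.1.measurableSpace]) ≤ J (g (k + 1)) := by
        refine hJ_mono (hmeasc _) (hmeasc _) ?_
        exact (EventuallyLE.trans (ae_of_all _ fun ω => le_max_right _ _) (hg_max k).symm.le)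
      exact lt_of_lt_of_le (by exact_mod_cast hselJ (k + 1)) h1
  have hgJ_le : ∀ n, J (g n) ≤ sup := fun n => hmem_le _ (hInv n).1
  have hJg_tendsto : Tendsto (fun n => J (g n)) atTop (nhds sup) := by
    have hlow : Tendsto (fun n : ℕ => sup - ((n : ℝ) + 1)⁻¹) atTop (nhds sup) := by
      have h0 : Tendsto (fun n : ℕ => ((n : ℝ) + 1)⁻¹) atTop (nhds 0) := by
        simpa [one_div] using tendsto_one_div_add_atTop_nhds_zero_nat (𝕜 := ℝ)
      simpa using tendsto_const_nhds.sub h0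
    exact tendsto_of_tendsto_of_tendsto_of_le_of_le hlow tendsto_const_nhds
      (fun n => (hgJ n).le) hgJ_le
  have hg_le_v : ∀ n, g n ≤ᵐ[μ] v R := fun n => (hv R hR).2.1 _ ⟨θn n, (hInv n).1, rfl⟩
  set V : Ω → ℝ := fun ω => ⨆ n, g n ω with hVdef
  have haeV : ∀ᵐ ω ∂μ, Tendsto (fun n => g n ω) atTop (nhds (V ω)) ∧ V ω ≤ v R ω ∧
      Monotone fun n => g n ω := by
    have h1 : ∀ᵐ ω ∂μ, ∀ n, g n ω ≤ g (n + 1) ω := ae_all_iff.2 hg_mono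
    have h2 : ∀ᵐ ω ∂μ, ∀ n, g n ω ≤ v R ω := ae_all_iff.2 hg_le_v
    filter_upwards [h1, h2] with ω hω1 hω2
    have hmono : Monotone fun n => g n ω := monotone_nat_of_le_succ hω1
    have hbdd : BddAbove (Set.range fun n => g n ω) := by
      refine ⟨v R ω, ?_⟩
      rintro x ⟨n, rfl⟩
      exact hω2 n
    exact ⟨tendsto_atTop_ciSup hmono hbdd, ciSup_le fun n => hω2 n, hmono⟩
  have hub : ∀ f ∈ valueSet ℱ μ T φ R hR.1, f ≤ᵐ[μ] V := by
    rintro f ⟨θ, hθ, rfl⟩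
    by_cases hi : Integrable (φ θ) μ
    swap
    · rw [condExp_of_not_integrable hi]
      filter_upwards [haeV, hcnn (θn 0) (hInv 0).1] with ω hω h0
      have : g 0 ω ≤ V ω := by
        refine ge_of_tendsto' hω.1 ?_
        intro n
        exact hω.2.2 (Nat.zero_le n)
      exact le_trans h0 this
    · have hmax : ∀ k, ∃ θ' : Ω → ℝ, MemTS ℱ μ T R θ' ∧
          (μ[φ θ'|hR.1.measurableSpace]) =ᵐ[μ]
            fun ω => max (g k ω) ((μ[φ θ|hR.1.measurableSpace]) ω) := by
        intro k
        refine ⟨pasteST R (θn k) θ (A (θn k) θ),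
          pasteST_memTS hR (hInv k).1 hθ (A := A (θn k) θ) (hAmeas _ _), ?_⟩
        have hp := (pasteST_condexp hφ hR (hInv k).1 hθ (hInv k).2 hi (A := A (θn k) θ) (hAmeas _ _)).2
        refine hp.trans (ae_of_all _ fun ω => ?_)
        by_cases h : ω ∈ A (θn k) θ
        · rw [Pi.add_apply, Set.indicator_of_mem h,
            Set.indicator_of_notMem (Set.notMem_compl_iff.2 h), add_zero]
          exact (max_eq_right h).symm
        · rw [Pi.add_apply, Set.indicator_of_notMem h,
            Set.indicator_of_mem (Set.mem_compl h), zero_add]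
          exact (max_eq_left (le_of_not_ge h)).symm
      have hJk : ∀ k, ∫ ω, Real.arctan (max (g k ω) ((μ[φ θ|hR.1.measurableSpace]) ω)) ∂μ
          ≤ sup := by
        intro k
        obtain ⟨θ', hθ', he⟩ := hmax k
        calc ∫ ω, Real.arctan (max (g k ω) ((μ[φ θ|hR.1.measurableSpace]) ω)) ∂μ
            = J (μ[φ θ'|hR.1.measurableSpace]) :=
              (integral_congr_ae (he.fun_comp Real.arctan)).symm
          _ ≤ sup := hmem_le _ hθ'
      set f : Ω → ℝ := μ[φ θ|hR.1.measurableSpace] with hfdef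
      set u : ℕ → Ω → ℝ := fun k ω => Real.arctan (max (g k ω) (f ω)) - Real.arctan (g k ω)
        with hudef
      have hu_meas : ∀ k, AEStronglyMeasurable (u k) μ := fun k =>
        ((Real.continuous_arctan.measurable.comp ((hgm (θn k)).max (hgm θ))).sub
          (Real.continuous_arctan.measurable.comp (hgm (θn k)))).aestronglyMeasurable
      have hu_bound : ∀ k, ∀ᵐ ω ∂μ, ‖u k ω‖ ≤ Real.pi := by
        intro k
        refine ae_of_all _ fun ω => ?_
        rw [Real.norm_eq_abs]
        have h1 := habs (max (g k ω) (f ω))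
        have h2 := habs (g k ω)
        have h3 : |u k ω| ≤ |Real.arctan (max (g k ω) (f ω))| + |Real.arctan (g k ω)| := by
          rw [hudef]
          exact abs_sub _ _
        linarith
      have hu_nonneg : ∀ k ω, 0 ≤ u k ω := fun k ω =>
        sub_nonneg.2 (Real.arctan_strictMono.monotone (le_max_left _ _))
      have hu_int : ∀ k, Integrable (u k) μ := fun k =>
        (harctan_int _ ((hgm (θn k)).max (hgm θ)).aestronglyMeasurable).sub
          (harctan_int _ (hgm (θn k)).aestronglyMeasurable)
      have hu_int_le : ∀ k, ∫ ω, u k ω ∂μ ≤ sup - J (g k) := by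
        intro k
        rw [hudef]
        rw [integral_sub (harctan_int _ ((hgm (θn k)).max (hgm θ)).aestronglyMeasurable)
          (harctan_int _ (hgm (θn k)).aestronglyMeasurable)]
        have := hJk k
        have hJg : J (g k) = ∫ ω, Real.arctan (g k ω) ∂μ := rfl
        linarith
      set u' : Ω → ℝ := fun ω => Real.arctan (max (V ω) (f ω)) - Real.arctan (V ω) with hu'def
      have h_tend : ∀ᵐ ω ∂μ, Tendsto (fun k => u k ω) atTop (nhds (u' ω)) := by
        filter_upwards [haeV] with ω hω
        have h1 : Tendsto (fun k => g k ω) atTop (nhds (V ω)) := hω.1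
        have hmaxt : Tendsto (fun k => max (g k ω) (f ω)) atTop
            (nhds (max (V ω) (f ω))) := h1.max tendsto_const_nhds
        exact ((Real.continuous_arctan.tendsto _).comp hmaxt).sub
          ((Real.continuous_arctan.tendsto _).comp h1)
      have hu'_int : Integrable u' μ :=
        ⟨aestronglyMeasurable_of_tendsto_ae _ hu_meas h_tend,
          hasFiniteIntegral_of_dominated_convergence
            (integrable_const Real.pi).hasFiniteIntegral hu_bound h_tend⟩
      have hdom : Tendsto (fun k => ∫ ω, u k ω ∂μ) atTop (nhds (∫ ω, u' ω ∂μ)) :=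
        tendsto_integral_of_dominated_convergence (fun _ => Real.pi) hu_meas
          (integrable_const _) hu_bound h_tend
      have h_upper : Tendsto (fun k => sup - J (g k)) atTop (nhds 0) := by
        simpa using (tendsto_const_nhds (x := sup)).sub hJg_tendsto
      have h_lim_le : ∫ ω, u' ω ∂μ ≤ 0 := le_of_tendsto_of_tendsto' hdom h_upper hu_int_le
      have h_lim_ge : (0 : ℝ) ≤ ∫ ω, u' ω ∂μ :=
        le_of_tendsto_of_tendsto' tendsto_const_nhds hdom
          fun k => integral_nonneg (hu_nonneg k)
      have h_lim : ∫ ω, u' ω ∂μ = 0 := le_antisymm h_lim_le h_lim_ge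
      have hu'0 : u' =ᵐ[μ] 0 := by
        refine (integral_eq_zero_iff_of_nonneg_ae ?_ hu'_int).1 h_lim
        exact ae_of_all _ fun ω =>
          sub_nonneg.2 (Real.arctan_strictMono.monotone (le_max_left _ _))
      filter_upwards [hu'0] with ω hω
      have heq : Real.arctan (max (V ω) (f ω)) = Real.arctan (V ω) := by
        have h0 := hω
        simp only [hu'def, Pi.zero_apply] at h0
        linarith
      have := Real.arctan_injective heq
      exact max_eq_left_iff.1 this
  have hvV : v R ≤ᵐ[μ] V := (hv R hR).2.2 V hub
  refine ⟨θn, fun n => (hInv n).1, fun n => (hInv n).2, hg_mono,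
    fun n => hcnn _ (hInv n).1, ?_⟩
  filter_upwards [haeV, hvV] with ω h1 h2
  have hVv : V ω = v R ω := le_antisymm h1.2.1 h2
  rw [← hVv]
  exact h1.1

end Aux2
section Aux3

variable {m : MeasurableSpace Ω} {ℱ : Filtration ℝ m} {μ : Measure Ω} {T : ℝ}
  {φ v : (Ω → ℝ) → Ω → ℝ}

/-- The value function is integrable. -/
lemma integrable_value [IsProbabilityMeasure μ] (hT : 0 < T) (hF0 : TrivialF0 ℱ μ)
    (hφ : Admissible ℱ μ T φ) (hv : IsValueFam ℱ μ T φ v)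
    {R θb : Ω → ℝ} (hR : IsStoppingTimeIn ℱ T R) (hθb : MemTS ℱ μ T R θb)
    (hib : Integrable (φ θb) μ) : Integrable (v R) μ := by
  obtain ⟨C, _hC0, hC⟩ := integral_condExp_le_bound hT hF0 hφ hv
  obtain ⟨θn, hM, _hI, hmono, hnn, htend⟩ := exists_seq_tendsto_value hφ hv hR hθb hib
  have hm' : hR.1.measurableSpace ≤ m := hR.1.measurableSpace_le
  set g : ℕ → Ω → ℝ := fun n => μ[φ (θn n)|hR.1.measurableSpace] with hgdef
  have hvmeas : AEStronglyMeasurable (v R) μ :=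
    (((hv R hR).1.mono hm' le_rfl)).stronglyMeasurable.aestronglyMeasurable
  have h0ae : 0 ≤ᵐ[μ] v R := by
    filter_upwards [htend, ae_all_iff.2 hnn] with ω h1 h2
    exact ge_of_tendsto' h1 fun n => h2 n
  refine ⟨hvmeas, ?_⟩
  rw [hasFiniteIntegral_iff_ofReal h0ae]
  have hgmeas : ∀ n, Measurable (g n) := fun _ =>
    (stronglyMeasurable_condExp.mono hm').measurable
  have hle : ∫⁻ ω, ENNReal.ofReal (v R ω) ∂μ ≤ ENNReal.ofReal C := by
    have hae2 : ∀ᵐ ω ∂μ, ENNReal.ofReal (v R ω) =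
        liminf (fun n => ENNReal.ofReal (g n ω)) atTop := by
      filter_upwards [htend] with ω h1
      have htoR : Tendsto (fun n => ENNReal.ofReal (g n ω)) atTop
          (nhds (ENNReal.ofReal (v R ω))) :=
        (ENNReal.continuous_ofReal.tendsto _).comp h1
      exact htoR.liminf_eq.symm
    calc ∫⁻ ω, ENNReal.ofReal (v R ω) ∂μ
        = ∫⁻ ω, liminf (fun n => ENNReal.ofReal (g n ω)) atTop ∂μ := lintegral_congr_ae hae2
      _ ≤ liminf (fun n => ∫⁻ ω, ENNReal.ofReal (g n ω) ∂μ) atTop :=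
          lintegral_liminf_le fun n => (hgmeas n).ennreal_ofReal
      _ ≤ ENNReal.ofReal C := by
          refine liminf_le_of_frequently_le' (Frequently.of_forall fun n => ?_)
          have heq : ∫⁻ ω, ENNReal.ofReal (g n ω) ∂μ = ENNReal.ofReal (∫ ω, g n ω ∂μ) :=
            (ofReal_integral_eq_lintegral_ofReal integrable_condExp (hnn n)).symm
          rw [heq]
          exact ENNReal.ofReal_le_ofReal
            (hC (θn n) (hM n).1 hR.1.measurableSpace hm' inferInstance)
  exact lt_of_le_of_lt hle ofReal_lt_top

/-- Tower property of conditional expectations along stopping times `S ≤ θ` a.s. -/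
lemma condexp_condexp_stopping [IsProbabilityMeasure μ] {S θ : Ω → ℝ}
    (hS : IsStoppingTime ℱ (fun ω => (S ω : WithTop ℝ))) (hθ : IsStoppingTime ℱ (fun ω => (θ ω : WithTop ℝ))) (hle : ∀ᵐ ω ∂μ, S ω ≤ θ ω)
    {f : Ω → ℝ} (hf : Integrable f μ) :
    μ[μ[f|hθ.measurableSpace]|hS.measurableSpace] =ᵐ[μ] μ[f|hS.measurableSpace] := by
  have hmS : hS.measurableSpace ≤ m := hS.measurableSpace_le
  have hmθ : hθ.measurableSpace ≤ m := hθ.measurableSpace_le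
  refine ae_eq_condExp_of_forall_setIntegral_eq hmS hf
    (fun s _ _ => integrable_condExp.integrableOn) (fun s hs hμs => ?_)
    (StronglyMeasurable.aestronglyMeasurable stronglyMeasurable_condExp)
  have hnull : μ {ω | ¬ S ω ≤ θ ω} = 0 := ae_iff.1 hle
  have hst : s =ᵐ[μ] (s ∩ {ω | S ω ≤ θ ω} : Set Ω) := by
    rw [ae_eq_set]
    constructor
    · refine measure_mono_null ?_ hnull
      intro ω hω
      simp only [Set.mem_diff, Set.mem_inter_iff, Set.mem_setOf_eq] at hω ⊢
      exact fun h => hω.2 ⟨hω.1, h⟩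
    · rw [Set.diff_eq_empty.2 Set.inter_subset_left]
      exact measure_empty
  have hsB : MeasurableSet[hθ.measurableSpace] (s ∩ {ω | S ω ≤ θ ω}) :=
    (IsStoppingTime.measurableSpace_mono (hS.min hθ) hθ fun ω => min_le_right _ _) _
      (by
      have h := IsStoppingTime.measurableSet_inter_le hS hθ s hs
      rwa [show {ω | (S ω : WithTop ℝ) ≤ (θ ω : WithTop ℝ)} = {ω | S ω ≤ θ ω} from by
        ext; simp] at h)
  calc ∫ x in s, (μ[μ[f|hθ.measurableSpace]|hS.measurableSpace]) x ∂μ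
      = ∫ x in s, (μ[f|hθ.measurableSpace]) x ∂μ :=
        setIntegral_condExp hmS integrable_condExp hs
    _ = ∫ x in (s ∩ {ω | S ω ≤ θ ω}), (μ[f|hθ.measurableSpace]) x ∂μ :=
        setIntegral_congr_set hst
    _ = ∫ x in (s ∩ {ω | S ω ≤ θ ω}), f x ∂μ := setIntegral_condExp hmθ hf hsB
    _ = ∫ x in s, f x ∂μ := (setIntegral_congr_set hst).symm

end Aux3
section Aux4

variable {m : MeasurableSpace Ω} {ℱ : Filtration ℝ m} {μ : Measure Ω} {T : ℝ}
  {φ v : (Ω → ℝ) → Ω → ℝ}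

/-- Supermartingale property of the value family along `S ≤ θs`. -/
lemma condexp_value_le [IsProbabilityMeasure μ] (hT : 0 < T) (hF0 : TrivialF0 ℱ μ)
    (hφ : Admissible ℱ μ T φ) (hv : IsValueFam ℱ μ T φ v)
    {S θs : Ω → ℝ} (hS : IsStoppingTimeIn ℱ T S) (hθs : MemTS ℱ μ T S θs)
    (hint : Integrable (φ θs) μ) :
    μ[v θs|hS.1.measurableSpace] ≤ᵐ[μ] v S := by
  have hm𝒢 : hS.1.measurableSpace ≤ m := hS.1.measurableSpace_le
  have hθsR : MemTS ℱ μ T θs θs := ⟨hθs.1, ae_of_all _ fun ω => le_rfl⟩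
  have hmℋ : hθs.1.1.measurableSpace ≤ m := hθs.1.1.measurableSpace_le
  obtain ⟨θn, hM, hI, hmono, hnn, htend⟩ := exists_seq_tendsto_value hφ hv hθs.1 hθsR hint
  have hvint : Integrable (v θs) μ := integrable_value hT hF0 hφ hv hθs.1 hθsR hint
  set g : ℕ → Ω → ℝ := fun n => μ[φ (θn n)|hθs.1.1.measurableSpace] with hgdef
  have hg_le : ∀ n, g n ≤ᵐ[μ] v θs := fun n => (hv θs hθs.1).2.1 _ ⟨θn n, hM n, rfl⟩
  have htower : ∀ n, μ[g n|hS.1.measurableSpace] =ᵐ[μ] μ[φ (θn n)|hS.1.measurableSpace] :=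
    fun n => condexp_condexp_stopping hS.1 hθs.1.1 hθs.2 (hI n)
  have hle_vS : ∀ n, μ[φ (θn n)|hS.1.measurableSpace] ≤ᵐ[μ] v S := by
    intro n
    refine (hv S hS).2.1 _ ⟨θn n, ⟨(hM n).1, ?_⟩, rfl⟩
    filter_upwards [hθs.2, (hM n).2] with ω h1 h2
    exact h1.trans h2
  set δ : ℕ → Ω → ℝ := fun n => μ[(v θs - g n : Ω → ℝ)|hS.1.measurableSpace] with hδdef
  have hgint : ∀ n, Integrable (g n) μ := fun _ => integrable_condExp
  have hδ_eq : ∀ n, μ[v θs|hS.1.measurableSpace] =ᵐ[μ]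
      μ[g n|hS.1.measurableSpace] + δ n := by
    intro n
    have hsub := condExp_sub (m := hS.1.measurableSpace) (μ := μ) hvint (hgint n)
    filter_upwards [hsub] with ω hω
    have : δ n ω = (μ[v θs|hS.1.measurableSpace]) ω - (μ[g n|hS.1.measurableSpace]) ω := by
      have := congrFun (funext fun _ => rfl : δ n = δ n) ω
      calc δ n ω = (μ[(v θs - g n : Ω → ℝ)|hS.1.measurableSpace]) ω := rfl
        _ = (μ[v θs|hS.1.measurableSpace] - μ[g n|hS.1.measurableSpace]) ω := hω
        _ = _ := rfl
    rw [Pi.add_apply, this]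
    ring
  have hδ_nonneg : ∀ n, (0 : Ω → ℝ) ≤ᵐ[μ] δ n := fun n =>
    condExp_nonneg (by
      filter_upwards [hg_le n] with ω h
      simpa using sub_nonneg.2 h)
  have hδmeas : ∀ n, Measurable (δ n) := fun n =>
    (stronglyMeasurable_condExp.mono hm𝒢).measurable
  have hδ_int : ∀ n, ∫ ω, δ n ω ∂μ = ∫ ω, v θs ω ∂μ - ∫ ω, g n ω ∂μ := by
    intro n
    rw [hδdef]
    rw [integral_condExp hm𝒢]
    simp only [Pi.sub_apply]
    rw [integral_sub hvint (hgint n)]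
  have hgn_tend : Tendsto (fun n => ∫ ω, g n ω ∂μ) atTop (nhds (∫ ω, v θs ω ∂μ)) := by
    refine tendsto_integral_of_dominated_convergence (fun ω => |v θs ω|)
      (fun n => (hgint n).aestronglyMeasurable) hvint.abs ?_ htend
    intro n
    filter_upwards [hnn n, hg_le n] with ω h1 h2
    rw [Real.norm_eq_abs, abs_of_nonneg h1]
    exact h2.trans (le_abs_self _)
  have hδint_tend : Tendsto (fun n => ∫ ω, δ n ω ∂μ) atTop (nhds 0) := by
    simp only [hδ_int]
    simpa using (tendsto_const_nhds (x := ∫ ω, v θs ω ∂μ)).sub hgn_tend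
  have hliminf : ∀ᵐ ω ∂μ, liminf (fun n => ENNReal.ofReal (δ n ω)) atTop = 0 := by
    have hf := lintegral_liminf_le (μ := μ) (u := atTop) fun n => (hδmeas n).ennreal_ofReal
    have hlim : liminf (fun n => ∫⁻ ω, ENNReal.ofReal (δ n ω) ∂μ) atTop = 0 := by
      have heq : ∀ n, ∫⁻ ω, ENNReal.ofReal (δ n ω) ∂μ = ENNReal.ofReal (∫ ω, δ n ω ∂μ) :=
        fun n => (ofReal_integral_eq_lintegral_ofReal integrable_condExp (hδ_nonneg n)).symm
      simp only [heq]
      have : Tendsto (fun n => ENNReal.ofReal (∫ ω, δ n ω ∂μ)) atTop (nhds 0) := by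
        simpa [Function.comp_def] using (ENNReal.continuous_ofReal.tendsto _).comp hδint_tend
      exact this.liminf_eq
    have h0 : ∫⁻ ω, liminf (fun n => ENNReal.ofReal (δ n ω)) atTop ∂μ = 0 :=
      le_antisymm (hf.trans hlim.le) bot_le
    rw [lintegral_eq_zero_iff (Measurable.liminf fun n => (hδmeas n).ennreal_ofReal)] at h0
    filter_upwards [h0] with ω hω
    exact hω
  have hall1 : ∀ᵐ ω ∂μ, ∀ n, (μ[v θs|hS.1.measurableSpace]) ω ≤ v S ω + δ n ω := by
    refine ae_all_iff.2 fun n => ?_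
    filter_upwards [hδ_eq n, htower n, hle_vS n] with ω h1 h2 h3
    rw [h1, Pi.add_apply, h2]
    linarith
  filter_upwards [hall1, ae_all_iff.2 hδ_nonneg, hliminf] with ω h1 h2 h3
  by_contra hcon
  push_neg at hcon
  set ε := ((μ[v θs|hS.1.measurableSpace]) ω - v S ω) / 2 with hε
  have hεpos : 0 < ε := by
    rw [hε]; linarith
  have hfreq : ∃ᶠ n in atTop, ENNReal.ofReal (δ n ω) < ENNReal.ofReal ε := by
    refine frequently_lt_of_liminf_lt ?_ ?_
    · isBoundedDefault
    · rw [h3]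
      exact ENNReal.ofReal_pos.2 hεpos
  obtain ⟨n, hn⟩ := hfreq.exists
  have hδε : δ n ω < ε := by
    have := (ENNReal.ofReal_lt_ofReal_iff hεpos).1 hn
    exact this
  have := h1 n
  rw [hε] at hδε
  linarith

end Aux4
/-- **Optimality criterium (Proposition 1.4).** For `θ* ∈ T_S` with `E[φ(θ*)] < ∞`,
the three assertions (1) `v(S) = E[φ(θ*)|F_S]` a.s.; (2) `v(θ*) = φ(θ*)` a.s. and
`E[v(S)] = E[v(θ*)]`; (3) `E[v(S)] = E[φ(θ*)]` are equivalent. -/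
theorem optimality_criterium {m : MeasurableSpace Ω}
    (ℱ : Filtration ℝ m) (μ : Measure Ω) [IsProbabilityMeasure μ]
    (T : ℝ) (hT : 0 < T) (hF0 : TrivialF0 ℱ μ)
    (φ : (Ω → ℝ) → Ω → ℝ) (hφ : Admissible ℱ μ T φ)
    (v : (Ω → ℝ) → Ω → ℝ) (hv : IsValueFam ℱ μ T φ v)
    (S θs : Ω → ℝ) (hS : IsStoppingTimeIn ℱ T S) (hθs : MemTS ℱ μ T S θs)
    (hint : Integrable (φ θs) μ) :
    ((v S =ᵐ[μ] μ[φ θs | hS.1.measurableSpace]) ↔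
      ((v θs =ᵐ[μ] φ θs) ∧ ∫ ω, v S ω ∂μ = ∫ ω, v θs ω ∂μ)) ∧
    ((v S =ᵐ[μ] μ[φ θs | hS.1.measurableSpace]) ↔
      ∫ ω, v S ω ∂μ = ∫ ω, φ θs ω ∂μ) := by
  have hm𝒢 : hS.1.measurableSpace ≤ m := hS.1.measurableSpace_le
  have hθsR : MemTS ℱ μ T θs θs := ⟨hθs.1, ae_of_all _ fun ω => le_rfl⟩
  have hmℋ : hθs.1.1.measurableSpace ≤ m := hθs.1.1.measurableSpace_le
  have hintvS : Integrable (v S) μ := integrable_value hT hF0 hφ hv hS hθs hint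
  have hintvθ : Integrable (v θs) μ := integrable_value hT hF0 hφ hv hθs.1 hθsR hint
  have hc_le : μ[φ θs|hS.1.measurableSpace] ≤ᵐ[μ] v S := (hv S hS).2.1 _ ⟨θs, hθs, rfl⟩
  have hc_int : ∫ ω, (μ[φ θs|hS.1.measurableSpace]) ω ∂μ = ∫ ω, φ θs ω ∂μ :=
    integral_condExp hm𝒢
  have hφ_le_v : φ θs ≤ᵐ[μ] v θs := by
    have h1 : (μ[φ θs|hθs.1.1.measurableSpace]) ≤ᵐ[μ] v θs :=
      (hv θs hθs.1).2.1 _ ⟨θs, hθsR, rfl⟩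
    have h2 : μ[φ θs|hθs.1.1.measurableSpace] = φ θs :=
      condExp_of_stronglyMeasurable hmℋ ((hφ.1 θs hθs.1).1.stronglyMeasurable) hint
    rwa [h2] at h1
  have hsuper : μ[v θs|hS.1.measurableSpace] ≤ᵐ[μ] v S :=
    condexp_value_le hT hF0 hφ hv hS hθs hint
  have h13 : (v S =ᵐ[μ] μ[φ θs|hS.1.measurableSpace]) →
      ∫ ω, v S ω ∂μ = ∫ ω, φ θs ω ∂μ := fun h => (integral_congr_ae h).trans hc_int
  have h31 : (∫ ω, v S ω ∂μ = ∫ ω, φ θs ω ∂μ) →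
      v S =ᵐ[μ] μ[φ θs|hS.1.measurableSpace] := by
    intro h
    have hw : Integrable (fun ω => v S ω - (μ[φ θs|hS.1.measurableSpace]) ω) μ :=
      hintvS.sub integrable_condExp
    have h0 : ∫ ω, (v S ω - (μ[φ θs|hS.1.measurableSpace]) ω) ∂μ = 0 := by
      rw [integral_sub hintvS integrable_condExp, h, hc_int]
      ring
    have hnn : 0 ≤ᵐ[μ] fun ω => v S ω - (μ[φ θs|hS.1.measurableSpace]) ω := by
      filter_upwards [hc_le] with ω hω
      simpa using hω
    have hz := (integral_eq_zero_iff_of_nonneg_ae hnn hw).1 h0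
    filter_upwards [hz] with ω hω
    have : v S ω - (μ[φ θs|hS.1.measurableSpace]) ω = 0 := hω
    linarith
  have h12 : (v S =ᵐ[μ] μ[φ θs|hS.1.measurableSpace]) → v θs =ᵐ[μ] φ θs := by
    intro h
    have hkey : μ[v θs|hS.1.measurableSpace] ≤ᵐ[μ] μ[φ θs|hS.1.measurableSpace] :=
      hsuper.trans h.le
    have hcs := condExp_sub (m := hS.1.measurableSpace) (μ := μ) hintvθ hint
    have hw : Integrable (fun ω => v θs ω - φ θs ω) μ := hintvθ.sub hint
    have h0le : ∫ ω, (v θs ω - φ θs ω) ∂μ ≤ 0 := by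
      have heq : ∫ ω, (v θs ω - φ θs ω) ∂μ =
          ∫ ω, (μ[(v θs - φ θs : Ω → ℝ)|hS.1.measurableSpace]) ω ∂μ := by
        rw [integral_condExp hm𝒢]
        simp only [Pi.sub_apply]
      rw [heq]
      refine integral_nonpos_of_ae ?_
      filter_upwards [hcs, hkey] with ω h1 h2
      have h1' : (μ[(v θs - φ θs : Ω → ℝ)|hS.1.measurableSpace]) ω =
          (μ[v θs|hS.1.measurableSpace]) ω - (μ[φ θs|hS.1.measurableSpace]) ω := h1
      rw [Pi.zero_apply]
      rw [h1']
      linarith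
    have h0ge : (0 : ℝ) ≤ ∫ ω, (v θs ω - φ θs ω) ∂μ := by
      refine integral_nonneg_of_ae ?_
      filter_upwards [hφ_le_v] with ω hω
      simpa using hω
    have h0 : ∫ ω, (v θs ω - φ θs ω) ∂μ = 0 := le_antisymm h0le h0ge
    have hnn : 0 ≤ᵐ[μ] fun ω => v θs ω - φ θs ω := by
      filter_upwards [hφ_le_v] with ω hω
      simpa using hω
    have hz := (integral_eq_zero_iff_of_nonneg_ae hnn hw).1 h0
    filter_upwards [hz] with ω hω
    have : v θs ω - φ θs ω = 0 := hω
    linarith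
  refine ⟨⟨fun h => ⟨h12 h, ?_⟩, fun h2 => h31 ?_⟩, h13, h31⟩
  · exact (h13 h).trans (integral_congr_ae (h12 h).symm)
  · exact h2.2.trans (integral_congr_ae h2.1)
end

section
/- For every stopping time S, E[v(S)] = sup_{θ ∈ T_S} E[φ(θ)], where v(S) = ess sup_{θ ∈ T_S} E[φ(θ)|F_S]. -/
open MeasureTheory Filter ENNReal

variable {Ω : Type*}

/-- Lattice lemma: the family of conditional expectations over `T_S` is stable by max. -/
lemma exists_lattice_max {m : MeasurableSpace Ω} {ℱ : Filtration ℝ m} {μ : Measure Ω}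
    [IsProbabilityMeasure μ] {T : ℝ} {φ : (Ω → ℝ) → Ω → ℝ}
    (hφ : Admissible ℱ μ T φ) {S : Ω → ℝ} (hS : IsStoppingTimeIn ℱ T S)
    (θ1 θ2 : Ω → ℝ) (h1 : MemTS ℱ μ T S θ1) (h2 : MemTS ℱ μ T S θ2) :
    ∃ θ3, MemTS ℱ μ T S θ3 ∧
      μ[φ θ3|hS.1.measurableSpace] =ᵐ[μ]
        fun ω => max ((μ[φ θ1|hS.1.measurableSpace]) ω) ((μ[φ θ2|hS.1.measurableSpace]) ω) := by
  classical
  by_cases hi1 : Integrable (φ θ1) μ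
  swap
  · refine ⟨θ2, h2, ?_⟩
    rw [condExp_of_not_integrable hi1]
    filter_upwards [condExp_nonneg (m := hS.1.measurableSpace)
      (Eventually.of_forall fun ω => (hφ.1 θ2 h2.1).2 ω)] with ω hω
    simpa using hω
  by_cases hi2 : Integrable (φ θ2) μ
  swap
  · refine ⟨θ1, h1, ?_⟩
    rw [condExp_of_not_integrable hi2]
    filter_upwards [condExp_nonneg (m := hS.1.measurableSpace)
      (Eventually.of_forall fun ω => (hφ.1 θ1 h1.1).2 ω)] with ω hω
    have h0 : (0:ℝ) ≤ (μ[φ θ1|hS.1.measurableSpace]) ω := hω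
    simp [max_eq_left h0]
  -- replace θi by max S θi
  set θ1' : Ω → ℝ := fun ω => max (S ω) (θ1 ω) with hθ1'def
  set θ2' : Ω → ℝ := fun ω => max (S ω) (θ2 ω) with hθ2'def
  have hst1 : IsStoppingTime ℱ (fun ω => (θ1' ω : WithTop ℝ)) := fun t => by
    convert (hS.1.max h1.1.1) t using 1; ext ω; simp [θ1']
  have hst2 : IsStoppingTime ℱ (fun ω => (θ2' ω : WithTop ℝ)) := fun t => by
    convert (hS.1.max h2.1.1) t using 1; ext ω; simp [θ2']
  have h1'mem : MemTS ℱ μ T S θ1' :=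
    ⟨⟨hst1, fun ω => ⟨le_trans (h1.1.2 ω).1 (le_max_right _ _),
        max_le (hS.2 ω).2 (h1.1.2 ω).2⟩⟩, Eventually.of_forall fun ω => le_max_left _ _⟩
  have h2'mem : MemTS ℱ μ T S θ2' :=
    ⟨⟨hst2, fun ω => ⟨le_trans (h2.1.2 ω).1 (le_max_right _ _),
        max_le (hS.2 ω).2 (h2.1.2 ω).2⟩⟩, Eventually.of_forall fun ω => le_max_left _ _⟩
  have hae1 : θ1' =ᵐ[μ] θ1 := h1.2.mono fun ω h => max_eq_right h
  have hae2 : θ2' =ᵐ[μ] θ2 := h2.2.mono fun ω h => max_eq_right h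
  have hφ1 : φ θ1' =ᵐ[μ] φ θ1 := by
    filter_upwards [hφ.2 θ1' θ1 h1'mem.1 h1.1, hae1] with ω h ha using h ha
  have hφ2 : φ θ2' =ᵐ[μ] φ θ2 := by
    filter_upwards [hφ.2 θ2' θ2 h2'mem.1 h2.1, hae2] with ω h ha using h ha
  have hi1' : Integrable (φ θ1') μ := hi1.congr hφ1.symm
  have hi2' : Integrable (φ θ2') μ := hi2.congr hφ2.symm
  set g1 : Ω → ℝ := μ[φ θ1'|hS.1.measurableSpace] with hg1def
  set g2 : Ω → ℝ := μ[φ θ2'|hS.1.measurableSpace] with hg2def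
  have hg1c : g1 =ᵐ[μ] μ[φ θ1|hS.1.measurableSpace] := condExp_congr_ae hφ1
  have hg2c : g2 =ᵐ[μ] μ[φ θ2|hS.1.measurableSpace] := condExp_congr_ae hφ2
  set A : Set Ω := {ω | g2 ω ≤ g1 ω} with hAdef
  have hAG : MeasurableSet[hS.1.measurableSpace] A :=
    measurableSet_le stronglyMeasurable_condExp.measurable stronglyMeasurable_condExp.measurable
  set θ3 : Ω → ℝ := A.piecewise θ1' θ2' with hθ3def
  have hSle1 : ∀ ω, S ω ≤ θ1' ω := fun ω => le_max_left _ _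
  have hSle2 : ∀ ω, S ω ≤ θ2' ω := fun ω => le_max_left _ _
  have hst3 : IsStoppingTime ℱ (fun ω => (θ3 ω : WithTop ℝ)) := by
    intro t
    simp only [WithTop.coe_le_coe]
    have hA' : MeasurableSet[ℱ t] (A ∩ {ω | S ω ≤ t}) := by simpa only [WithTop.coe_le_coe] using ((hS.1.measurableSet A).mp hAG).2 t
    have hAc' : MeasurableSet[ℱ t] (Aᶜ ∩ {ω | S ω ≤ t}) := by simpa only [WithTop.coe_le_coe] using ((hS.1.measurableSet Aᶜ).mp hAG.compl).2 t
    have hset : {ω | θ3 ω ≤ t}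
        = (A ∩ {ω | S ω ≤ t} ∩ {ω | θ1' ω ≤ t}) ∪ (Aᶜ ∩ {ω | S ω ≤ t} ∩ {ω | θ2' ω ≤ t}) := by
      ext ω
      by_cases hω : ω ∈ A
      · simp only [Set.mem_setOf_eq, hθ3def, Set.piecewise_eq_of_mem _ _ _ hω, Set.mem_union,
          Set.mem_inter_iff, Set.mem_compl_iff, hω, true_and, not_true, false_and, or_false]
        exact ⟨fun h => ⟨le_trans (hSle1 ω) h, h⟩, fun h => h.2⟩
      · simp only [Set.mem_setOf_eq, hθ3def, Set.piecewise_eq_of_notMem _ _ _ hω, Set.mem_union,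
          Set.mem_inter_iff, Set.mem_compl_iff, hω, not_false_iff, true_and, false_and, false_or]
        exact ⟨fun h => ⟨le_trans (hSle2 ω) h, h⟩, fun h => h.2⟩
    rw [hset]
    exact (hA'.inter (by simpa only [WithTop.coe_le_coe] using hst1 t)).union (hAc'.inter (by simpa only [WithTop.coe_le_coe] using hst2 t))
  have hmem3 : MemTS ℱ μ T S θ3 := by
    refine ⟨⟨hst3, fun ω => ?_⟩, Eventually.of_forall fun ω => ?_⟩
    · by_cases hω : ω ∈ A
      · rw [hθ3def]; rw [Set.piecewise_eq_of_mem _ _ _ hω]; exact h1'mem.1.2 ω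
      · rw [hθ3def]; rw [Set.piecewise_eq_of_notMem _ _ _ hω]; exact h2'mem.1.2 ω
    · by_cases hω : ω ∈ A
      · rw [hθ3def]; rw [Set.piecewise_eq_of_mem _ _ _ hω]; exact hSle1 ω
      · rw [hθ3def]; rw [Set.piecewise_eq_of_notMem _ _ _ hω]; exact hSle2 ω
  have hφ3ae : φ θ3 =ᵐ[μ] A.indicator (φ θ1') + Aᶜ.indicator (φ θ2') := by
    filter_upwards [hφ.2 θ3 θ1' hmem3.1 h1'mem.1, hφ.2 θ3 θ2' hmem3.1 h2'mem.1] with ω hc1 hc2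
    by_cases hω : ω ∈ A
    · rw [hc1 (Set.piecewise_eq_of_mem _ _ _ hω)]
      simp [Set.indicator_of_mem hω, Set.indicator_of_notMem (Set.notMem_compl_iff.mpr hω)]
    · rw [hc2 (Set.piecewise_eq_of_notMem _ _ _ hω)]
      simp [Set.indicator_of_notMem hω, Set.indicator_of_mem (Set.mem_compl hω)]
  have hAm : MeasurableSet[m] A := hS.1.measurableSpace_le A hAG
  have hiA : Integrable (A.indicator (φ θ1')) μ := hi1'.indicator hAm
  have hiAc : Integrable (Aᶜ.indicator (φ θ2')) μ := hi2'.indicator hAm.compl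
  refine ⟨θ3, hmem3, ?_⟩
  calc μ[φ θ3|hS.1.measurableSpace] =ᵐ[μ] μ[A.indicator (φ θ1') + Aᶜ.indicator (φ θ2')|hS.1.measurableSpace] :=
        condExp_congr_ae hφ3ae
    _ =ᵐ[μ] μ[A.indicator (φ θ1')|hS.1.measurableSpace] + μ[Aᶜ.indicator (φ θ2')|hS.1.measurableSpace] := condExp_add hiA hiAc _
    _ =ᵐ[μ] A.indicator g1 + Aᶜ.indicator g2 :=
        EventuallyEq.add (condExp_indicator hi1' hAG) (condExp_indicator hi2' hAG.compl)
    _ =ᵐ[μ] fun ω => max (g1 ω) (g2 ω) := by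
        refine Eventually.of_forall fun ω => ?_
        by_cases hω : ω ∈ A
        · have hle : g2 ω ≤ g1 ω := hω
          simp [Set.indicator_of_mem hω,
            Set.indicator_of_notMem (Set.notMem_compl_iff.mpr hω), max_eq_left hle]
        · have hle : g1 ω ≤ g2 ω := le_of_lt (lt_of_not_ge hω)
          simp [Set.indicator_of_notMem hω, Set.indicator_of_mem (Set.mem_compl hω),
            max_eq_right hle]
    _ =ᵐ[μ] fun ω => max ((μ[φ θ1|hS.1.measurableSpace]) ω) ((μ[φ θ2|hS.1.measurableSpace]) ω) := by
        filter_upwards [hg1c, hg2c] with ω e1 e2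
        rw [e1, e2]

/-- **Remark 1.5, equation (4).** `E[v(S)] = sup_{θ ∈ T_S} E[φ(θ)]`. -/
theorem expectation_value_eq_sup {m : MeasurableSpace Ω}
    (ℱ : Filtration ℝ m) (μ : Measure Ω) [IsProbabilityMeasure μ]
    (T : ℝ) (hT : 0 < T) (hF0 : TrivialF0 ℱ μ)
    (φ : (Ω → ℝ) → Ω → ℝ) (hφ : Admissible ℱ μ T φ)
    (v : (Ω → ℝ) → Ω → ℝ) (hv : IsValueFam ℱ μ T φ v)
    (S : Ω → ℝ) (hS : IsStoppingTimeIn ℱ T S) :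
    IsLUB {x : ℝ | ∃ θ, MemTS ℱ μ T S θ ∧ x = ∫ ω, φ θ ω ∂μ}
      (∫ ω, v S ω ∂μ) := by
  classical
  set sA : Set ℝ := {x : ℝ | ∃ θ, MemTS ℱ μ T S θ ∧ x = ∫ ω, φ θ ω ∂μ} with hsAdef
  have hFSle : hS.1.measurableSpace ≤ m := hS.1.measurableSpace_le
  -- θ = T belongs to T_S
  have hTmem : MemTS ℱ μ T S (fun _ => T) :=
    ⟨⟨isStoppingTime_const ℱ T, fun ω => ⟨hT.le, le_rfl⟩⟩,
      Eventually.of_forall fun ω => (hS.2 ω).2⟩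
  have hsA_ne : sA.Nonempty := ⟨∫ ω, φ (fun _ => T) ω ∂μ, ⟨_, hTmem, rfl⟩⟩
  -- the bound coming from v 0 and triviality of F_0
  have hS0 : IsStoppingTimeIn ℱ T (fun _ => (0:ℝ)) :=
    ⟨isStoppingTime_const ℱ 0, fun ω => ⟨le_rfl, hT.le⟩⟩
  obtain ⟨hv0meas, hv0sup⟩ := hv _ hS0
  have hBn : ∀ n : ℕ, MeasurableSet[ℱ 0] {ω | v (fun _ => (0:ℝ)) ω ≤ (n:ℝ)} := by
    intro n
    have h1 : MeasurableSet[hS0.1.measurableSpace] {ω | v (fun _ => (0:ℝ)) ω ≤ (n:ℝ)} :=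
      hv0meas measurableSet_Iic
    have h2 := ((hS0.1.measurableSet _).mp h1).2 0
    simpa using h2
  have hex : ∃ n : ℕ, μ {ω | v (fun _ => (0:ℝ)) ω ≤ (n:ℝ)} = 1 := by
    by_contra hcon
    push_neg at hcon
    have h0 : ∀ n : ℕ, μ {ω | v (fun _ => (0:ℝ)) ω ≤ (n:ℝ)} = 0 :=
      fun n => (hF0 _ (hBn n)).resolve_right (hcon n)
    have hun : μ (⋃ n : ℕ, {ω | v (fun _ => (0:ℝ)) ω ≤ (n:ℝ)}) = 0 := measure_iUnion_null h0
    have huniv : (⋃ n : ℕ, {ω | v (fun _ => (0:ℝ)) ω ≤ (n:ℝ)}) = Set.univ :=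
      Set.eq_univ_of_forall fun ω => by
        obtain ⟨n, hn⟩ := exists_nat_ge (v (fun _ => (0:ℝ)) ω)
        exact Set.mem_iUnion.mpr ⟨n, hn⟩
    rw [huniv, measure_univ] at hun
    exact one_ne_zero hun
  obtain ⟨c, hc⟩ := hex
  have hvc : v (fun _ => (0:ℝ)) ≤ᵐ[μ] fun _ => (c:ℝ) := by
    have hcompl : μ {ω | v (fun _ => (0:ℝ)) ω ≤ (c:ℝ)}ᶜ = 0 :=
      (prob_compl_eq_zero_iff (ℱ.le 0 _ (hBn c))).mpr hc
    refine ae_iff.mpr ?_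
    have hset : {a | ¬ v (fun _ => (0:ℝ)) a ≤ (c:ℝ)} = {ω | v (fun _ => (0:ℝ)) ω ≤ (c:ℝ)}ᶜ := by
      ext ω; simp
    rw [hset]
    exact hcompl
  have hboundA : ∀ x ∈ sA, x ≤ (c:ℝ) := by
    rintro x ⟨θ, hθ, rfl⟩
    have hθ0 : MemTS ℱ μ T (fun _ => (0:ℝ)) θ :=
      ⟨hθ.1, Eventually.of_forall fun ω => (hθ.1.2 ω).1⟩
    have hmem : μ[φ θ|hS0.1.measurableSpace] ∈ valueSet ℱ μ T φ _ hS0.1 := ⟨θ, hθ0, rfl⟩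
    have hle := (hv0sup.1 _ hmem).trans hvc
    have hint : ∫ ω, (μ[φ θ|hS0.1.measurableSpace]) ω ∂μ ≤ ∫ _ω, (c:ℝ) ∂μ :=
      integral_mono_ae integrable_condExp (integrable_const _) hle
    rw [integral_condExp hS0.1.measurableSpace_le] at hint
    simpa using hint
  have hbdd : BddAbove sA := ⟨(c:ℝ), hboundA⟩
  set M : ℝ := sSup sA with hMdef
  have hlub : IsLUB sA M := isLUB_csSup hsA_ne hbdd
  suffices hkey : ∫ ω, v S ω ∂μ = M by rw [hkey]; exact hlub
  -- generic facts about H θ := μ[φ θ|F_S]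
  have hHint : ∀ θ : Ω → ℝ, Integrable (μ[φ θ|hS.1.measurableSpace]) μ :=
    fun _ => integrable_condExp
  have hHm : ∀ θ : Ω → ℝ, Measurable (μ[φ θ|hS.1.measurableSpace]) :=
    fun θ => (stronglyMeasurable_condExp.mono hFSle).measurable
  have hHnn : ∀ θ : Ω → ℝ, MemTS ℱ μ T S θ → 0 ≤ᵐ[μ] μ[φ θ|hS.1.measurableSpace] :=
    fun θ h => condExp_nonneg (Eventually.of_forall fun ω => (hφ.1 θ h.1).2 ω)
  have hHeq : ∀ θ : Ω → ℝ, ∫ ω, (μ[φ θ|hS.1.measurableSpace]) ω ∂μ = ∫ ω, φ θ ω ∂μ :=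
    fun θ => integral_condExp hFSle
  have hle_M : ∀ θ : Ω → ℝ, MemTS ℱ μ T S θ →
      ∫ ω, (μ[φ θ|hS.1.measurableSpace]) ω ∂μ ≤ M := by
    intro θ h
    rw [hHeq θ]
    exact le_csSup hbdd ⟨θ, h, rfl⟩
  have hle_v : ∀ θ : Ω → ℝ, MemTS ℱ μ T S θ →
      μ[φ θ|hS.1.measurableSpace] ≤ᵐ[μ] v S :=
    fun θ h => (hv S hS).2.1 _ ⟨θ, h, rfl⟩
  -- choose an approximating sequence
  have hseq : ∀ n : ℕ, ∃ θ, MemTS ℱ μ T S θ ∧ M - 1/((n:ℝ)+1) < ∫ ω, φ θ ω ∂μ := by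
    intro n
    have hlt : M - 1/((n:ℝ)+1) < M := by
      have : (0:ℝ) < 1/((n:ℝ)+1) := by positivity
      linarith
    obtain ⟨x, hx, hxlt⟩ := exists_lt_of_lt_csSup hsA_ne hlt
    obtain ⟨θ, hθ, rfl⟩ := hx
    exact ⟨θ, hθ, hxlt⟩
  choose θs hθs hθslt using hseq
  -- lattice combination function
  have hlat : ∀ p q : Ω → ℝ, MemTS ℱ μ T S p → MemTS ℱ μ T S q →
      ∃ θ3, MemTS ℱ μ T S θ3 ∧
        μ[φ θ3|hS.1.measurableSpace] =ᵐ[μ]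
          fun ω => max ((μ[φ p|hS.1.measurableSpace]) ω) ((μ[φ q|hS.1.measurableSpace]) ω) :=
    fun p q hp hq => exists_lattice_max hφ hS p q hp hq
  choose lat hlatmem hlatmax using hlat
  -- the increasing sequence Z
  let Z : ℕ → {z : Ω → ℝ // MemTS ℱ μ T S z} := fun n =>
    Nat.rec ⟨θs 0, hθs 0⟩
      (fun k p => ⟨lat p.1 (θs (k+1)) p.2 (hθs (k+1)), hlatmem _ _ _ _⟩) n
  have hZ0 : (Z 0).1 = θs 0 := rfl
  have hZsucc : ∀ n, μ[φ (Z (n+1)).1|hS.1.measurableSpace] =ᵐ[μ]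
      fun ω => max ((μ[φ (Z n).1|hS.1.measurableSpace]) ω)
        ((μ[φ (θs (n+1))|hS.1.measurableSpace]) ω) :=
    fun n => hlatmax (Z n).1 (θs (n+1)) (Z n).2 (hθs (n+1))
  set a : ℕ → ℝ := fun n => ∫ ω, (μ[φ (Z n).1|hS.1.measurableSpace]) ω ∂μ with hadef
  have hstep : ∀ n, μ[φ (Z n).1|hS.1.measurableSpace] ≤ᵐ[μ]
      μ[φ (Z (n+1)).1|hS.1.measurableSpace] := by
    intro n
    filter_upwards [hZsucc n] with ω h
    rw [h]; exact le_max_left _ _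
  have haMono : Monotone a :=
    monotone_nat_of_le_succ fun n => integral_mono_ae (hHint _) (hHint _) (hstep n)
  have ha_le : ∀ n, a n ≤ M := fun n => hle_M _ (Z n).2
  have ha_lt : ∀ n : ℕ, M - 1/((n:ℝ)+1) < a n := by
    intro n
    cases n with
    | zero =>
      have : a 0 = ∫ ω, φ (θs 0) ω ∂μ := by rw [hadef]; simp only [hZ0, hHeq]
      rw [this]; exact_mod_cast hθslt 0
    | succ k =>
      have h1 : ∫ ω, (μ[φ (θs (k+1))|hS.1.measurableSpace]) ω ∂μ ≤ a (k+1) := by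
        refine integral_mono_ae (hHint _) (hHint _) ?_
        filter_upwards [hZsucc k] with ω h
        rw [h]; exact le_max_right _ _
      rw [hHeq] at h1
      exact lt_of_lt_of_le (hθslt (k+1)) h1
  have ha_tendsto : Tendsto a atTop (nhds M) := by
    have hlow : Tendsto (fun n : ℕ => M - 1/((n:ℝ)+1)) atTop (nhds M) := by
      have := tendsto_one_div_add_atTop_nhds_zero_nat (𝕜 := ℝ)
      have h2 := (tendsto_const_nhds (x := M) (f := atTop (α := ℕ))).sub this
      simpa using h2
    exact tendsto_of_tendsto_of_tendsto_of_le_of_le hlow tendsto_const_nhds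
      (fun n => (ha_lt n).le) ha_le
  have hM0 : 0 ≤ M := by
    refine le_trans ?_ (ha_le 0)
    exact integral_nonneg_of_ae (hHnn _ (Z 0).2)
  -- monotone convergence setup
  set G : Ω → ℝ≥0∞ := fun ω => ⨆ n, ENNReal.ofReal ((μ[φ (Z n).1|hS.1.measurableSpace]) ω)
    with hGdef
  have hGmeas : Measurable G := by
    refine Measurable.iSup fun n => ?_
    exact (hHm _).ennreal_ofReal
  have hmono_ae : ∀ᵐ ω ∂μ, Monotone fun n => (μ[φ (Z n).1|hS.1.measurableSpace]) ω := by
    have := ae_all_iff.mpr hstep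
    filter_upwards [this] with ω h
    exact monotone_nat_of_le_succ fun n => h n
  have hGlint : ∫⁻ ω, G ω ∂μ = ENNReal.ofReal M := by
    rw [hGdef]
    rw [lintegral_iSup' (fun n => ((hHm _).ennreal_ofReal).aemeasurable)
      (hmono_ae.mono fun ω h i j hij => ENNReal.ofReal_le_ofReal (h hij))]
    have heach : ∀ n, ∫⁻ ω, ENNReal.ofReal ((μ[φ (Z n).1|hS.1.measurableSpace]) ω) ∂μ
        = ENNReal.ofReal (a n) :=
      fun n => (ofReal_integral_eq_lintegral_ofReal (hHint _) (hHnn _ (Z n).2)).symm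
    simp_rw [heach]
    exact iSup_eq_of_tendsto (fun i j hij => ENNReal.ofReal_le_ofReal (haMono hij))
      ((ENNReal.continuous_ofReal.tendsto M).comp ha_tendsto)
  have hGlt : ∀ᵐ ω ∂μ, G ω < ⊤ :=
    ae_lt_top hGmeas (by rw [hGlint]; exact ENNReal.ofReal_ne_top)
  set g : Ω → ℝ := fun ω => (G ω).toReal with hgdef
  have hgmeas : Measurable g := hGmeas.ennreal_toReal
  have hgint : Integrable g μ :=
    integrable_toReal_of_lintegral_ne_top hGmeas.aemeasurable
      (by rw [hGlint]; exact ENNReal.ofReal_ne_top)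
  have hgI : ∫ ω, g ω ∂μ = M := by
    rw [hgdef]
    rw [integral_toReal hGmeas.aemeasurable hGlt, hGlint, ENNReal.toReal_ofReal hM0]
  have hofg : ∀ᵐ ω ∂μ, ENNReal.ofReal (g ω) = G ω :=
    hGlt.mono fun ω h => ENNReal.ofReal_toReal h.ne
  -- g is an a.e. upper bound for the whole family
  have hub : ∀ θ : Ω → ℝ, MemTS ℱ μ T S θ → μ[φ θ|hS.1.measurableSpace] ≤ᵐ[μ] g := by
    intro θ hθ
    set b : ℕ → Ω → ℝ := fun n ω =>
      max ((μ[φ (Z n).1|hS.1.measurableSpace]) ω) ((μ[φ θ|hS.1.measurableSpace]) ω) with hbdef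
    have hbint : ∀ n, Integrable (b n) μ := fun n => (hHint _).sup (hHint θ)
    have hbnn : ∀ n, 0 ≤ᵐ[μ] b n := by
      intro n
      filter_upwards [hHnn θ hθ] with ω h
      exact le_trans h (le_max_right _ _)
    have hbI : ∀ n, ∫ ω, b n ω ∂μ ≤ M := by
      intro n
      have hmax := hlatmax (Z n).1 θ (Z n).2 hθ
      have : ∫ ω, b n ω ∂μ = ∫ ω, (μ[φ (lat (Z n).1 θ (Z n).2 hθ)|hS.1.measurableSpace]) ω ∂μ :=
        integral_congr_ae hmax.symm
      rw [this]
      exact hle_M _ (hlatmem _ _ _ _)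
    have hbmono : ∀ᵐ ω ∂μ, Monotone fun n => b n ω := by
      filter_upwards [hmono_ae] with ω h i j hij
      exact max_le_max (h hij) le_rfl
    have hbmeas : ∀ n, Measurable (b n) := fun n => (hHm _).max (hHm θ)
    have key : ∫⁻ ω, ENNReal.ofReal (max (g ω) ((μ[φ θ|hS.1.measurableSpace]) ω)) ∂μ
        ≤ ENNReal.ofReal M := by
      have hmono' : Monotone (ENNReal.ofReal) := fun x y h => ENNReal.ofReal_le_ofReal h
      have heq : ∀ᵐ ω ∂μ, ENNReal.ofReal (max (g ω) ((μ[φ θ|hS.1.measurableSpace]) ω))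
          = ⨆ n, ENNReal.ofReal (b n ω) := by
        filter_upwards [hofg] with ω hω
        rw [hmono'.map_max, hω]
        have hbeq : ∀ n, ENNReal.ofReal (b n ω)
            = max (ENNReal.ofReal ((μ[φ (Z n).1|hS.1.measurableSpace]) ω))
              (ENNReal.ofReal ((μ[φ θ|hS.1.measurableSpace]) ω)) := by
          intro n; rw [hbdef, hmono'.map_max]
        simp_rw [hbeq]
        rw [hGdef]
        refine le_antisymm ?_ ?_
        · refine max_le ?_ ?_
          · exact iSup_mono fun n => le_max_left _ _
          · exact le_trans (le_max_right _ _) (le_iSup (fun n =>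
              max (ENNReal.ofReal ((μ[φ (Z n).1|hS.1.measurableSpace]) ω))
                (ENNReal.ofReal ((μ[φ θ|hS.1.measurableSpace]) ω))) 0)
        · refine iSup_le fun n => max_le ?_ (le_max_right _ _)
          exact le_trans (le_iSup (fun k =>
            ENNReal.ofReal ((μ[φ (Z k).1|hS.1.measurableSpace]) ω)) n) (le_max_left _ _)
      rw [lintegral_congr_ae heq]
      rw [lintegral_iSup' (fun n => ((hbmeas n).ennreal_ofReal).aemeasurable)
        (hbmono.mono fun ω h i j hij => ENNReal.ofReal_le_ofReal (h hij))]
      refine iSup_le fun n => ?_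
      rw [← ofReal_integral_eq_lintegral_ofReal (hbint n) (hbnn n)]
      exact ENNReal.ofReal_le_ofReal (hbI n)
    have hmax_int : Integrable (fun ω => max (g ω) ((μ[φ θ|hS.1.measurableSpace]) ω)) μ :=
      hgint.sup (hHint θ)
    have hmax_nn : 0 ≤ᵐ[μ] fun ω => max (g ω) ((μ[φ θ|hS.1.measurableSpace]) ω) :=
      Eventually.of_forall fun ω => le_trans ENNReal.toReal_nonneg (le_max_left _ _)
    have hI : ∫ ω, max (g ω) ((μ[φ θ|hS.1.measurableSpace]) ω) ∂μ ≤ ∫ ω, g ω ∂μ := by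
      rw [hgI]
      rw [integral_eq_lintegral_of_nonneg_ae hmax_nn
        ((hgmeas.max (hHm θ)).aestronglyMeasurable)]
      calc (∫⁻ ω, ENNReal.ofReal (max (g ω) ((μ[φ θ|hS.1.measurableSpace]) ω)) ∂μ).toReal
          ≤ (ENNReal.ofReal M).toReal := ENNReal.toReal_mono ENNReal.ofReal_ne_top key
        _ = M := ENNReal.toReal_ofReal hM0
    have hdiff0 : (fun ω => max (g ω) ((μ[φ θ|hS.1.measurableSpace]) ω) - g ω) =ᵐ[μ] 0 := by
      have hI0 : ∫ ω, (max (g ω) ((μ[φ θ|hS.1.measurableSpace]) ω) - g ω) ∂μ = 0 := by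
        have hsub : ∫ ω, (max (g ω) ((μ[φ θ|hS.1.measurableSpace]) ω) - g ω) ∂μ
            = (∫ ω, max (g ω) ((μ[φ θ|hS.1.measurableSpace]) ω) ∂μ) - ∫ ω, g ω ∂μ :=
          integral_sub hmax_int hgint
        have hnn : 0 ≤ ∫ ω, (max (g ω) ((μ[φ θ|hS.1.measurableSpace]) ω) - g ω) ∂μ :=
          integral_nonneg fun ω => sub_nonneg.mpr (le_max_left _ _)
        rw [hsub] at hnn ⊢
        linarith
      exact (integral_eq_zero_iff_of_nonneg_ae
        (Eventually.of_forall fun ω => sub_nonneg.mpr (le_max_left _ _))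
        (hmax_int.sub hgint)).mp hI0
    filter_upwards [hdiff0] with ω h
    have h' : max (g ω) ((μ[φ θ|hS.1.measurableSpace]) ω) - g ω = 0 := h
    have := le_max_right (g ω) ((μ[φ θ|hS.1.measurableSpace]) ω)
    linarith
  -- conclude v S =ᵐ g
  have hv_le_g : v S ≤ᵐ[μ] g := by
    refine (hv S hS).2.2 g ?_
    rintro f ⟨θ, hθ, rfl⟩
    exact hub θ hθ
  have hg_le_v : g ≤ᵐ[μ] v S := by
    have hall : ∀ᵐ ω ∂μ, ∀ n, (μ[φ (Z n).1|hS.1.measurableSpace]) ω ≤ v S ω :=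
      ae_all_iff.mpr fun n => hle_v _ (Z n).2
    filter_upwards [hall, hGlt, hHnn _ (Z 0).2] with ω hallω hfin h0
    have h1 : G ω ≤ ENNReal.ofReal (v S ω) := by
      rw [hGdef]
      exact iSup_le fun n => ENNReal.ofReal_le_ofReal (hallω n)
    calc g ω = (G ω).toReal := rfl
      _ ≤ (ENNReal.ofReal (v S ω)).toReal := ENNReal.toReal_mono ENNReal.ofReal_ne_top h1
      _ = v S ω := ENNReal.toReal_ofReal (le_trans h0 (hallω 0))
  have hvg : v S =ᵐ[μ] g := hv_le_g.antisymm hg_le_v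
  rw [integral_congr_ae hvg, hgI]
end

section
/- If the admissible family {φ(θ), θ ∈ T_0} is right-continuous in expectation along stopping times (RCE), then the value function family {v(S), S ∈ T_0} is also RCE: for any S ∈ T_0 and any sequence of stopping times S_n ↓ S a.s., E[v(S_n)] → E[v(S)]. -/
open MeasureTheory Filter ENNReal

variable {Ω : Type*}

section VFRAux

variable {m : MeasurableSpace Ω} {ℱ : Filtration ℝ m} {μ : Measure Ω} {T : ℝ}
variable {φ v : (Ω → ℝ) → Ω → ℝ}

lemma vfr_ms_le {τ : Ω → ℝ} (hτ : IsStoppingTime ℱ (fun ω => (τ ω : WithTop ℝ))) :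
    hτ.measurableSpace ≤ m :=
  hτ.measurableSpace_le

lemma vfr_st_le {τ : Ω → ℝ} (h : IsStoppingTime ℱ (fun ω => (τ ω : WithTop ℝ))) (t : ℝ) :
    MeasurableSet[ℱ t] {ω | τ ω ≤ t} := by
  have h' := h t
  simp only [WithTop.coe_le_coe] at h'
  exact h'

lemma vfr_st_of {τ : Ω → ℝ} (h : ∀ t : ℝ, MeasurableSet[ℱ t] {ω | τ ω ≤ t}) :
    IsStoppingTime ℱ (fun ω => (τ ω : WithTop ℝ)) := by
  intro t
  simp only [WithTop.coe_le_coe]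
  exact h t

lemma vfr_st_meas {R : Ω → ℝ} (hR : IsStoppingTime ℱ (fun ω => (R ω : WithTop ℝ)))
    {A : Set Ω} (hA : MeasurableSet[hR.measurableSpace] A) (t : ℝ) :
    MeasurableSet[ℱ t] (A ∩ {ω | R ω ≤ t}) := by
  have h' := ((hR.measurableSet A).1 hA).2 t
  simp only [WithTop.coe_le_coe] at h'
  exact h'

lemma vfr_st_max {τ R : Ω → ℝ} (hτ : IsStoppingTime ℱ (fun ω => (τ ω : WithTop ℝ)))
    (hR : IsStoppingTime ℱ (fun ω => (R ω : WithTop ℝ))) :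
    IsStoppingTime ℱ (fun ω => ((max (τ ω) (R ω) : ℝ) : WithTop ℝ)) := by
  refine vfr_st_of fun t => ?_
  simp only [max_le_iff, Set.setOf_and]
  exact (vfr_st_le hτ t).inter (vfr_st_le hR t)

/-- A `[0,T]`-valued stopping time built by gluing countably many stopping times dominating a
common stopping time `R` along an `F_R`-measurable countable cover. -/
lemma vfr_assembly {R : Ω → ℝ} (hR : IsStoppingTime ℱ (fun ω => (R ω : WithTop ℝ)))
    (σ : ℕ → Ω → ℝ) (hσ : ∀ j, IsStoppingTimeIn ℱ T (σ j)) (hge : ∀ j ω, R ω ≤ σ j ω)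
    (Q : ℕ → Set Ω) (hQ : ∀ j, MeasurableSet[hR.measurableSpace] (Q j))
    (J : Ω → ℕ) (hJ1 : ∀ ω, ω ∈ Q (J ω)) (hJ2 : ∀ ω i, i < J ω → ω ∉ Q i) :
    IsStoppingTimeIn ℱ T (fun ω => σ (J ω) ω) := by
  refine ⟨vfr_st_of ?_, fun ω => (hσ _).2 ω⟩
  intro t
  have hset : {ω | σ (J ω) ω ≤ t}
      = ⋃ j, (((Q j \ ⋃ i, ⋃ (_ : i < j), Q i) ∩ {ω | R ω ≤ t}) ∩ {ω | σ j ω ≤ t}) := by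
    ext ω
    simp only [Set.mem_setOf_eq, Set.mem_iUnion, Set.mem_inter_iff, Set.mem_diff]
    constructor
    · intro h
      refine ⟨J ω, ⟨⟨hJ1 ω, ?_⟩, le_trans (hge _ ω) h⟩, h⟩
      rintro ⟨i, hi, hQi⟩
      exact hJ2 ω i hi hQi
    · rintro ⟨j, ⟨⟨hj, hnot⟩, -⟩, hle⟩
      have hfind : J ω = j := by
        rcases lt_trichotomy (J ω) j with hlt | heq | hgt
        · exfalso
          exact hnot ⟨J ω, hlt, hJ1 ω⟩
        · exact heq
        · exact absurd hj (hJ2 ω j hgt)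
      rw [hfind]
      exact hle
  change MeasurableSet[ℱ t] {ω | σ (J ω) ω ≤ t}
  rw [hset]
  refine MeasurableSet.iUnion fun j => MeasurableSet.inter ?_ (vfr_st_le (hσ j).1 t)
  have hQ' : MeasurableSet[hR.measurableSpace] (Q j \ ⋃ i, ⋃ (_ : i < j), Q i) :=
    (hQ j).diff (MeasurableSet.iUnion fun i => MeasurableSet.iUnion fun _ => hQ i)
  exact (vfr_st_meas hR hQ' t)

/-- Two-branch gluing of stopping times along an `F_R`-measurable set. -/
lemma vfr_ite {R σ₁ σ₂ : Ω → ℝ} (hR : IsStoppingTime ℱ (fun ω => (R ω : WithTop ℝ)))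
    (h1 : IsStoppingTimeIn ℱ T σ₁) (h2 : IsStoppingTimeIn ℱ T σ₂)
    (hge1 : ∀ ω, R ω ≤ σ₁ ω) (hge2 : ∀ ω, R ω ≤ σ₂ ω)
    {A : Set Ω} (hA : MeasurableSet[hR.measurableSpace] A) [DecidablePred (· ∈ A)] :
    IsStoppingTimeIn ℱ T (fun ω => if ω ∈ A then σ₁ ω else σ₂ ω) := by
  refine ⟨vfr_st_of ?_, fun ω => ?_⟩
  · intro t
    change MeasurableSet[ℱ t] {ω | (if ω ∈ A then σ₁ ω else σ₂ ω) ≤ t}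
    have hset : {ω | (if ω ∈ A then σ₁ ω else σ₂ ω) ≤ t}
        = ((A ∩ {ω | R ω ≤ t}) ∩ {ω | σ₁ ω ≤ t})
          ∪ ((Aᶜ ∩ {ω | R ω ≤ t}) ∩ {ω | σ₂ ω ≤ t}) := by
      ext ω
      simp only [Set.mem_setOf_eq, Set.mem_union, Set.mem_inter_iff, Set.mem_compl_iff]
      constructor
      · intro h
        by_cases hω : ω ∈ A
        · rw [if_pos hω] at h
          exact Or.inl ⟨⟨hω, le_trans (hge1 ω) h⟩, h⟩
        · rw [if_neg hω] at h
          exact Or.inr ⟨⟨hω, le_trans (hge2 ω) h⟩, h⟩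
      · rintro (⟨⟨hω, -⟩, h⟩ | ⟨⟨hω, -⟩, h⟩)
        · rwa [if_pos hω]
        · rwa [if_neg hω]
    rw [hset]
    refine MeasurableSet.union ?_ ?_
    · exact ((vfr_st_meas hR hA t).inter (vfr_st_le h1.1 t))
    · exact ((vfr_st_meas hR hA.compl t).inter (vfr_st_le h2.1 t))
  · by_cases hω : ω ∈ A <;> simp only [hω, if_true, if_false]
    · exact h1.2 ω
    · exact h2.2 ω


/-- The set `T_R` of admissible stopping times dominating `R`. -/
def TSet (ℱ : Filtration ℝ m) (μ : Measure Ω) (T : ℝ) (R : Ω → ℝ) : Set (Ω → ℝ) :=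
  {τ | MemTS ℱ μ T R τ}

/-- The set of expected rewards over `T_R`. -/
def ASet (ℱ : Filtration ℝ m) (μ : Measure Ω) (T : ℝ) (φ : (Ω → ℝ) → Ω → ℝ) (R : Ω → ℝ) :
    Set ℝ :=
  (fun τ => ∫ ω, φ τ ω ∂μ) '' TSet ℱ μ T R

lemma isEssSupOf_integral_sSup {Ω : Type*} {m0 : MeasurableSpace Ω} {μ : Measure Ω}
    [IsProbabilityMeasure μ] {s : Set (Ω → ℝ)} {v : Ω → ℝ}
    (hv : IsEssSupOf μ s v) (hvm : AEStronglyMeasurable v μ)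
    (hne : s.Nonempty)
    (hint : ∀ f ∈ s, Integrable f μ) (hnn : ∀ f ∈ s, 0 ≤ᵐ[μ] f)
    (hdir : ∀ f ∈ s, ∀ g ∈ s, ∃ h ∈ s, f ≤ᵐ[μ] h ∧ g ≤ᵐ[μ] h)
    (hB : BddAbove ((fun f => ∫ ω, f ω ∂μ) '' s)) :
    Integrable v μ ∧ ∫ ω, v ω ∂μ = sSup ((fun f => ∫ ω, f ω ∂μ) '' s) := by
  classical
  set B := (fun f => ∫ ω, f ω ∂μ) '' s with hBdef
  have hBne : B.Nonempty := hne.image _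
  set α := sSup B with hαdef
  have hα0 : 0 ≤ α := by
    obtain ⟨f0, hf0⟩ := hne
    exact le_trans (integral_nonneg_of_ae (hnn f0 hf0)) (le_csSup hB ⟨f0, hf0, rfl⟩)
  obtain ⟨u, hu_mono, hu_tendsto, hu_mem⟩ := exists_seq_tendsto_sSup hBne hB
  choose F hF_mem hF_eq using fun n => (hu_mem n)
  -- recursive construction of an a.e. increasing sequence in s
  have hcomb : ∀ _p : {p : Ω → ℝ // p ∈ s}, ∀ _q : {p : Ω → ℝ // p ∈ s},
      ∃ r : {p : Ω → ℝ // p ∈ s}, _p.1 ≤ᵐ[μ] r.1 ∧ _q.1 ≤ᵐ[μ] r.1 := by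
    rintro ⟨p, hp⟩ ⟨q, hq⟩
    obtain ⟨r, hr, h1, h2⟩ := hdir p hp q hq
    exact ⟨⟨r, hr⟩, h1, h2⟩
  choose comb hcomb1 hcomb2 using hcomb
  let G : ℕ → {p : Ω → ℝ // p ∈ s} := fun n =>
    Nat.rec ⟨F 0, hF_mem 0⟩ (fun n a => comb a ⟨F (n + 1), hF_mem (n + 1)⟩) n
  set g : ℕ → Ω → ℝ := fun n => (G n).1 with hgdef
  have hg_mem : ∀ n, g n ∈ s := fun n => (G n).2
  have hG_succ : ∀ n, g n ≤ᵐ[μ] g (n + 1) := fun n => hcomb1 _ _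
  have hG_F : ∀ n, F n ≤ᵐ[μ] g n := by
    intro n
    cases n with
    | zero => exact ae_of_all _ fun ω => le_rfl
    | succ k =>
        show F (k + 1) ≤ᵐ[μ] (comb (G k) ⟨F (k + 1), hF_mem (k + 1)⟩).1
        exact hcomb2 (G k) ⟨F (k + 1), hF_mem (k + 1)⟩
  have hae : ∀ᵐ ω ∂μ, (∀ n, g n ω ≤ g (n + 1) ω) ∧ (∀ n, g n ω ≤ v ω) ∧ (∀ n, 0 ≤ g n ω) := by
    refine ((ae_all_iff.2 hG_succ).and ((ae_all_iff.2 fun n => hv.1 _ (hg_mem n)).and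
      (ae_all_iff.2 fun n => hnn _ (hg_mem n))))
  set Gs : Ω → ℝ := fun ω => ⨆ n, g n ω with hGsdef
  have hae' : ∀ᵐ ω ∂μ, Monotone (fun n => g n ω) ∧
      Tendsto (fun n => g n ω) atTop (nhds (Gs ω)) ∧ Gs ω ≤ v ω ∧ 0 ≤ Gs ω := by
    filter_upwards [hae] with ω h
    have hmono : Monotone fun n => g n ω := monotone_nat_of_le_succ h.1
    have hbdd : BddAbove (Set.range fun n => g n ω) := by
      refine ⟨v ω, ?_⟩
      rintro x ⟨n, rfl⟩
      exact h.2.1 n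
    refine ⟨hmono, tendsto_atTop_ciSup hmono hbdd, ciSup_le h.2.1,
      le_trans (h.2.2 0) (le_ciSup hbdd 0)⟩
  have hw_le : ∀ n, ∫ ω, g n ω ∂μ ≤ α := fun n => le_csSup hB ⟨g n, hg_mem n, rfl⟩
  have hw_ge : ∀ n, u n ≤ ∫ ω, g n ω ∂μ := by
    intro n
    rw [← hF_eq n]
    exact integral_mono_ae (hint _ (hF_mem n)) (hint _ (hg_mem n)) (hG_F n)
  have hw_tendsto : Tendsto (fun n => ∫ ω, g n ω ∂μ) atTop (nhds α) :=
    tendsto_of_tendsto_of_tendsto_of_le_of_le hu_tendsto tendsto_const_nhds hw_ge hw_le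
  -- pass to lintegrals
  have hlam_eq : ∀ (h : Ω → ℝ), h ∈ s → ∫⁻ ω, ENNReal.ofReal (h ω) ∂μ
      = ENNReal.ofReal (∫ ω, h ω ∂μ) := fun h hh =>
    (ofReal_integral_eq_lintegral_ofReal (hint _ hh) (hnn _ hh)).symm
  have hg_aem : ∀ n, AEMeasurable (fun ω => ENNReal.ofReal (g n ω)) μ := fun n =>
    ENNReal.measurable_ofReal.comp_aemeasurable (hint _ (hg_mem n)).aemeasurable
  have hmct : Tendsto (fun n => ∫⁻ ω, ENNReal.ofReal (g n ω) ∂μ) atTop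
      (nhds (∫⁻ ω, ENNReal.ofReal (Gs ω) ∂μ)) := by
    refine lintegral_tendsto_of_tendsto_of_monotone hg_aem ?_ ?_
    · filter_upwards [hae'] with ω h
      exact fun i j hij => ENNReal.ofReal_le_ofReal (h.1 hij)
    · filter_upwards [hae'] with ω h
      exact (ENNReal.continuous_ofReal.tendsto _).comp h.2.1
  have hmct' : Tendsto (fun n => ∫⁻ ω, ENNReal.ofReal (g n ω) ∂μ) atTop
      (nhds (ENNReal.ofReal α)) := by
    have := (ENNReal.continuous_ofReal.tendsto α).comp hw_tendsto
    refine Tendsto.congr (fun n => (hlam_eq _ (hg_mem n)).symm) this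
  have hlamG : ∫⁻ ω, ENNReal.ofReal (Gs ω) ∂μ = ENNReal.ofReal α :=
    tendsto_nhds_unique hmct hmct'
  -- Gs is an a.e. measurable sup at the ENNReal level
  have hGs_aem : AEMeasurable (fun ω => ENNReal.ofReal (Gs ω)) μ := by
    have h1 : AEMeasurable (fun ω => ⨆ n, ENNReal.ofReal (g n ω)) μ := by
      exact AEMeasurable.iSup fun n => hg_aem n
    refine h1.congr ?_
    filter_upwards [hae'] with ω h
    have : Tendsto (fun n => ENNReal.ofReal (g n ω)) atTop
        (nhds (⨆ n, ENNReal.ofReal (g n ω))) :=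
      tendsto_atTop_iSup fun i j hij => ENNReal.ofReal_le_ofReal (h.1 hij)
    exact tendsto_nhds_unique this ((ENNReal.continuous_ofReal.tendsto _).comp h.2.1)
  -- every member of s is a.e. below Gs
  have hkey : ∀ f' ∈ s, f' ≤ᵐ[μ] Gs := by
    intro f' hf'
    choose h' hh'_mem hh'_1 hh'_2 using fun n => hdir f' hf' (g n) (hg_mem n)
    set q : ℕ → Ω → ℝ := fun n ω => max (f' ω) (g n ω) with hqdef
    have hq_int : ∀ n, Integrable (q n) μ := fun n =>
      (hint f' hf').sup (hint _ (hg_mem n))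
    have hq_le : ∀ n, ∫ ω, q n ω ∂μ ≤ α := by
      intro n
      refine le_trans (integral_mono_ae (hq_int n) (hint _ (hh'_mem n)) ?_)
        (le_csSup hB ⟨h' n, hh'_mem n, rfl⟩)
      filter_upwards [hh'_1 n, hh'_2 n] with ω h1 h2
      exact max_le h1 h2
    have hq_nn : ∀ n, 0 ≤ᵐ[μ] q n := fun n =>
      (hnn f' hf').mono fun ω h => le_trans h (le_max_left _ _)
    have hq_aem : ∀ n, AEMeasurable (fun ω => ENNReal.ofReal (q n ω)) μ := fun n =>
      ENNReal.measurable_ofReal.comp_aemeasurable (hq_int n).aemeasurable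
    have hmctq : Tendsto (fun n => ∫⁻ ω, ENNReal.ofReal (q n ω) ∂μ) atTop
        (nhds (∫⁻ ω, ENNReal.ofReal (max (f' ω) (Gs ω)) ∂μ)) := by
      refine lintegral_tendsto_of_tendsto_of_monotone hq_aem ?_ ?_
      · filter_upwards [hae'] with ω h
        exact fun i j hij => ENNReal.ofReal_le_ofReal (max_le_max le_rfl (h.1 hij))
      · filter_upwards [hae'] with ω h
        exact (ENNReal.continuous_ofReal.tendsto _).comp (tendsto_const_nhds.max h.2.1)
    have hqlim_le : ∫⁻ ω, ENNReal.ofReal (max (f' ω) (Gs ω)) ∂μ ≤ ENNReal.ofReal α := by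
      refine le_of_tendsto hmctq ?_
      filter_upwards with n
      calc ∫⁻ ω, ENNReal.ofReal (q n ω) ∂μ = ENNReal.ofReal (∫ ω, q n ω ∂μ) := by
            exact (ofReal_integral_eq_lintegral_ofReal (hq_int n) (hq_nn n)).symm
        _ ≤ ENNReal.ofReal α := ENNReal.ofReal_le_ofReal (hq_le n)
    have hG_le_qlim : ∫⁻ ω, ENNReal.ofReal (Gs ω) ∂μ
        ≤ ∫⁻ ω, ENNReal.ofReal (max (f' ω) (Gs ω)) ∂μ :=
      lintegral_mono fun ω => ENNReal.ofReal_le_ofReal (le_max_right _ _)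
    have heq : ∫⁻ ω, ENNReal.ofReal (max (f' ω) (Gs ω)) ∂μ
        = ∫⁻ ω, ENNReal.ofReal (Gs ω) ∂μ :=
      le_antisymm (by rw [hlamG]; exact hqlim_le) hG_le_qlim
    -- deduce a.e. equality
    have hsub : ∫⁻ ω, (ENNReal.ofReal (max (f' ω) (Gs ω)) - ENNReal.ofReal (Gs ω)) ∂μ = 0 := by
      rw [lintegral_sub' hGs_aem (by rw [hlamG]; exact ENNReal.ofReal_ne_top)
        (ae_of_all _ fun ω => ENNReal.ofReal_le_ofReal (le_max_right _ _))]
      rw [heq, tsub_self]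
    have hsub_aem : AEMeasurable
        (fun ω => ENNReal.ofReal (max (f' ω) (Gs ω)) - ENNReal.ofReal (Gs ω)) μ := by
      have hmax_aem : AEMeasurable (fun ω => ENNReal.ofReal (max (f' ω) (Gs ω))) μ := by
        have h1 : AEMeasurable (fun ω => ENNReal.ofReal (f' ω)) μ :=
          ENNReal.measurable_ofReal.comp_aemeasurable (hint f' hf').aemeasurable
        refine (h1.sup hGs_aem).congr (ae_of_all _ fun ω => ?_)
        rcases le_total (f' ω) (Gs ω) with h | h
        · simp [max_eq_right h, max_eq_right (ENNReal.ofReal_le_ofReal h)]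
        · simp [max_eq_left h, max_eq_left (ENNReal.ofReal_le_ofReal h)]
      exact hmax_aem.sub hGs_aem
    have hae_zero := (lintegral_eq_zero_iff' hsub_aem).1 hsub
    filter_upwards [hae_zero, hae'] with ω h0 h1
    have hle : ENNReal.ofReal (max (f' ω) (Gs ω)) ≤ ENNReal.ofReal (Gs ω) :=
      tsub_eq_zero_iff_le.1 h0
    by_contra hcon
    push_neg at hcon
    have hfpos : 0 < f' ω := lt_of_le_of_lt h1.2.2.2 hcon
    have : ENNReal.ofReal (Gs ω) < ENNReal.ofReal (f' ω) :=
      (ENNReal.ofReal_lt_ofReal_iff hfpos).2 hcon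
    rw [max_eq_left hcon.le] at hle
    exact absurd (lt_of_lt_of_le this hle) (lt_irrefl _)
  -- conclude v =ᵐ Gs
  have hvGs : v =ᵐ[μ] Gs := by
    have h1 : v ≤ᵐ[μ] Gs := hv.2 Gs hkey
    have h2 : Gs ≤ᵐ[μ] v := hae'.mono fun ω h => h.2.2.1
    exact h1.antisymm h2
  have hv_nn : 0 ≤ᵐ[μ] v := by
    filter_upwards [hvGs, hae'] with ω h1 h2
    rw [h1]; exact h2.2.2.2
  have hlam_v : ∫⁻ ω, ENNReal.ofReal (v ω) ∂μ = ENNReal.ofReal α := by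
    rw [← hlamG]
    exact lintegral_congr_ae (hvGs.mono fun ω h =>
      show ENNReal.ofReal (v ω) = ENNReal.ofReal (Gs ω) from congrArg _ h)
  have hv_int : Integrable v μ := by
    refine ⟨hvm, ?_⟩
    refine (hasFiniteIntegral_iff_norm v).2 ?_
    have hnorm : ∫⁻ ω, ENNReal.ofReal ‖v ω‖ ∂μ = ENNReal.ofReal α := by
      rw [← hlam_v]
      exact lintegral_congr_ae (hv_nn.mono fun ω h =>
        show ENNReal.ofReal ‖v ω‖ = ENNReal.ofReal (v ω) by rw [Real.norm_of_nonneg h])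
    rw [hnorm]
    exact ENNReal.ofReal_lt_top
  refine ⟨hv_int, ?_⟩
  rw [integral_eq_lintegral_of_nonneg_ae hv_nn hvm, hlam_v, ENNReal.toReal_ofReal hα0]


lemma vfr_TSet_nonempty {R : Ω → ℝ} (hR : IsStoppingTimeIn ℱ T R) :
    R ∈ TSet ℱ μ T R := ⟨hR, ae_of_all _ fun ω => le_rfl⟩

lemma vfr_phi_aesm (hφ : Admissible ℱ μ T φ) {τ : Ω → ℝ} (hτ : IsStoppingTimeIn ℱ T τ) :
    AEStronglyMeasurable (φ τ) μ :=
  (((hφ.1 τ hτ).1).mono (vfr_ms_le hτ.1) le_rfl).aestronglyMeasurable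

lemma vfr_phi_nn (hφ : Admissible ℱ μ T φ) {τ : Ω → ℝ} (hτ : IsStoppingTimeIn ℱ T τ) :
    0 ≤ᵐ[μ] φ τ := ae_of_all _ fun ω => (hφ.1 τ hτ).2 ω

/-- Replacing `τ ∈ T_R` by `τ ⊔ R` keeps the reward a.e. unchanged. -/
lemma vfr_max_mem (hφ : Admissible ℱ μ T φ) {R τ : Ω → ℝ} (hR : IsStoppingTimeIn ℱ T R)
    (hτ : MemTS ℱ μ T R τ) :
    MemTS ℱ μ T R (fun ω => max (τ ω) (R ω)) ∧ (∀ ω, R ω ≤ max (τ ω) (R ω)) ∧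
      φ (fun ω => max (τ ω) (R ω)) =ᵐ[μ] φ τ := by
  have hSTIn : IsStoppingTimeIn ℱ T fun ω => max (τ ω) (R ω) := by
    refine ⟨vfr_st_max hτ.1.1 hR.1, fun ω => ⟨le_trans (hτ.1.2 ω).1 (le_max_left _ _),
      max_le (hτ.1.2 ω).2 (hR.2 ω).2⟩⟩
  refine ⟨⟨hSTIn, ae_of_all _ fun ω => le_max_right _ _⟩, fun ω => le_max_right _ _, ?_⟩
  have hadm := hφ.2 (fun ω => max (τ ω) (R ω)) τ hSTIn hτ.1
  filter_upwards [hadm, hτ.2] with ω h1 h2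
  exact h1 (max_eq_left h2)

/-- Expectation of the conditional expectation of a reward. -/
lemma vfr_integral_condExp {R τ : Ω → ℝ} [IsProbabilityMeasure μ]
    (hR : IsStoppingTimeIn ℱ T R) :
    ∫ ω, (μ[φ τ|hR.1.measurableSpace]) ω ∂μ = ∫ ω, φ τ ω ∂μ :=
  integral_condExp (vfr_ms_le hR.1)

/-- Facts about members of the value set. -/
lemma vfr_member [IsProbabilityMeasure μ] (hφ : Admissible ℱ μ T φ) {R : Ω → ℝ}
    (hR : IsStoppingTimeIn ℱ T R) {f : Ω → ℝ}
    (hf : f ∈ valueSet ℱ μ T φ R hR.1) :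
    Integrable f μ ∧ 0 ≤ᵐ[μ] f ∧ (∫ ω, f ω ∂μ) ∈ ASet ℱ μ T φ R := by
  obtain ⟨τ, hτ, rfl⟩ := hf
  refine ⟨integrable_condExp, condExp_nonneg (vfr_phi_nn hφ hτ.1), ?_⟩
  rw [vfr_integral_condExp hR]
  exact ⟨τ, hτ, rfl⟩

lemma vfr_image_valueSet [IsProbabilityMeasure μ] (hφ : Admissible ℱ μ T φ) {R : Ω → ℝ}
    (hR : IsStoppingTimeIn ℱ T R) :
    (fun f => ∫ ω, f ω ∂μ) '' valueSet ℱ μ T φ R hR.1 = ASet ℱ μ T φ R := by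
  ext x
  constructor
  · rintro ⟨f, hf, rfl⟩
    exact (vfr_member hφ hR hf).2.2
  · rintro ⟨τ, hτ, rfl⟩
    exact ⟨μ[φ τ|hR.1.measurableSpace], ⟨τ, hτ, rfl⟩, vfr_integral_condExp hR⟩

/-- The value set is a.e. upward directed. -/
lemma vfr_directed [IsProbabilityMeasure μ] (hφ : Admissible ℱ μ T φ) {R : Ω → ℝ}
    (hR : IsStoppingTimeIn ℱ T R) :
    ∀ f ∈ valueSet ℱ μ T φ R hR.1, ∀ g ∈ valueSet ℱ μ T φ R hR.1,
      ∃ h ∈ valueSet ℱ μ T φ R hR.1, f ≤ᵐ[μ] h ∧ g ≤ᵐ[μ] h := by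
  classical
  rintro f ⟨τ₁, hτ₁, rfl⟩ g ⟨τ₂, hτ₂, rfl⟩
  obtain ⟨hm₁, hge₁, hcong₁⟩ := vfr_max_mem hφ hR hτ₁
  obtain ⟨hm₂, hge₂, hcong₂⟩ := vfr_max_mem hφ hR hτ₂
  set σ₁ : Ω → ℝ := fun ω => max (τ₁ ω) (R ω) with hσ₁def
  set σ₂ : Ω → ℝ := fun ω => max (τ₂ ω) (R ω) with hσ₂def
  have hcc₁ : μ[φ τ₁|hR.1.measurableSpace] =ᵐ[μ] μ[φ σ₁|hR.1.measurableSpace] :=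
    (condExp_congr_ae hcong₁).symm
  have hcc₂ : μ[φ τ₂|hR.1.measurableSpace] =ᵐ[μ] μ[φ σ₂|hR.1.measurableSpace] :=
    (condExp_congr_ae hcong₂).symm
  by_cases hi₁ : Integrable (φ σ₁) μ
  · by_cases hi₂ : Integrable (φ σ₂) μ
    · -- combine on the measurable set where the first conditional expectation dominates
      set f₁ : Ω → ℝ := μ[φ σ₁|hR.1.measurableSpace] with hf₁def
      set f₂ : Ω → ℝ := μ[φ σ₂|hR.1.measurableSpace] with hf₂def
      set A : Set Ω := {ω | f₂ ω ≤ f₁ ω} with hAdef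
      have hAmeas : MeasurableSet[hR.1.measurableSpace] A :=
        measurableSet_le stronglyMeasurable_condExp.measurable
          stronglyMeasurable_condExp.measurable
      set τ₃ : Ω → ℝ := fun ω => if ω ∈ A then σ₁ ω else σ₂ ω with hτ₃def
      have hτ₃STIn : IsStoppingTimeIn ℱ T τ₃ :=
        vfr_ite hR.1 hm₁.1 hm₂.1 hge₁ hge₂ hAmeas
      have hτ₃mem : MemTS ℱ μ T R τ₃ := by
        refine ⟨hτ₃STIn, ae_of_all _ fun ω => ?_⟩
        by_cases hω : ω ∈ A <;> simp only [hτ₃def, hω, if_true, if_false]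
        · exact hge₁ ω
        · exact hge₂ ω
      have hAm : MeasurableSet A := vfr_ms_le hR.1 _ hAmeas
      have hd : φ τ₃ =ᵐ[μ] A.indicator (φ σ₁) + Aᶜ.indicator (φ σ₂) := by
        filter_upwards [hφ.2 τ₃ σ₁ hτ₃STIn hm₁.1, hφ.2 τ₃ σ₂ hτ₃STIn hm₂.1] with ω h1 h2
        by_cases hω : ω ∈ A
        · have hv1 : τ₃ ω = σ₁ ω := by simp only [hτ₃def, hω, if_true]
          rw [Pi.add_apply, Set.indicator_of_mem hω,
            Set.indicator_of_notMem (by simpa using hω), add_zero]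
          exact h1 hv1
        · have hv2 : τ₃ ω = σ₂ ω := by simp only [hτ₃def, hω, if_false]
          rw [Pi.add_apply, Set.indicator_of_notMem hω,
            Set.indicator_of_mem (by simpa using hω), zero_add]
          exact h2 hv2
      have hind₁ : Integrable (A.indicator (φ σ₁)) μ := hi₁.indicator hAm
      have hind₂ : Integrable (Aᶜ.indicator (φ σ₂)) μ := hi₂.indicator hAm.compl
      have hce : μ[φ τ₃|hR.1.measurableSpace] =ᵐ[μ] A.indicator f₁ + Aᶜ.indicator f₂ := by
        refine (condExp_congr_ae hd).trans ?_
        refine (condExp_add hind₁ hind₂ _).trans ?_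
        exact (condExp_indicator hi₁ hAmeas).add (condExp_indicator hi₂ hAmeas.compl)
      have hval1 : ∀ ω, ω ∈ A → (A.indicator f₁ + Aᶜ.indicator f₂) ω = f₁ ω := by
        intro ω hω
        rw [Pi.add_apply, Set.indicator_of_mem hω,
          Set.indicator_of_notMem (by simpa using hω), add_zero]
      have hval2 : ∀ ω, ω ∉ A → (A.indicator f₁ + Aᶜ.indicator f₂) ω = f₂ ω := by
        intro ω hω
        rw [Pi.add_apply, Set.indicator_of_notMem hω,
          Set.indicator_of_mem (by simpa using hω), zero_add]
      have hge1 : f₁ ≤ᵐ[μ] μ[φ τ₃|hR.1.measurableSpace] := by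
        filter_upwards [hce] with ω h
        rw [h]
        by_cases hω : ω ∈ A
        · rw [hval1 ω hω]
        · rw [hval2 ω hω]
          exact le_of_lt (lt_of_not_ge hω)
      have hge2 : f₂ ≤ᵐ[μ] μ[φ τ₃|hR.1.measurableSpace] := by
        filter_upwards [hce] with ω h
        rw [h]
        by_cases hω : ω ∈ A
        · rw [hval1 ω hω]
          exact hω
        · rw [hval2 ω hω]
      exact ⟨μ[φ τ₃|hR.1.measurableSpace], ⟨τ₃, hτ₃mem, rfl⟩,
        hcc₁.trans_le hge1, hcc₂.trans_le hge2⟩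
    · refine ⟨μ[φ τ₁|hR.1.measurableSpace], ⟨τ₁, hτ₁, rfl⟩, ae_of_all _ fun ω => le_rfl, ?_⟩
      have h0 : μ[φ σ₂|hR.1.measurableSpace] = 0 := condExp_of_not_integrable hi₂
      refine hcc₂.trans_le ?_
      rw [h0]
      exact condExp_nonneg (vfr_phi_nn hφ hτ₁.1)
  · refine ⟨μ[φ τ₂|hR.1.measurableSpace], ⟨τ₂, hτ₂, rfl⟩, ?_, ae_of_all _ fun ω => le_rfl⟩
    have h0 : μ[φ σ₁|hR.1.measurableSpace] = 0 := condExp_of_not_integrable hi₁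
    refine hcc₁.trans_le ?_
    rw [h0]
    exact condExp_nonneg (vfr_phi_nn hφ hτ₂.1)


/-- Under RCE and existence of a finite value function, expected rewards over `T_R` are
bounded above. -/
lemma vfr_bddAbove [IsProbabilityMeasure μ] (hT : 0 < T) (hφ : Admissible ℱ μ T φ)
    (hrce : RCEFam ℱ μ T φ) (hv : IsValueFam ℱ μ T φ v) {R : Ω → ℝ}
    (hR : IsStoppingTimeIn ℱ T R) :
    BddAbove (ASet ℱ μ T φ R) := by
  classical
  by_contra hB
  obtain ⟨hvmeas, hess⟩ := hv R hR
  set C : ℕ → Set Ω := fun i => {ω | v R ω ≤ (i : ℝ)} with hCdef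
  have hCmeasR : ∀ i : ℕ, MeasurableSet[hR.1.measurableSpace] (C i) := fun i =>
    hvmeas measurableSet_Iic
  have hCmeas : ∀ i : ℕ, MeasurableSet (C i) := fun i => vfr_ms_le hR.1 _ (hCmeasR i)
  have hCmono : ∀ {i j : ℕ}, i ≤ j → C i ⊆ C j := fun {i j} hij ω hω =>
    show v R ω ≤ (j : ℝ) from le_trans (show v R ω ≤ (i : ℝ) from hω) (Nat.cast_le.2 hij)
  have hCcov : ∀ ω, ∃ i : ℕ, ω ∈ C i := fun ω => exists_nat_ge (v R ω)
  have hTst : IsStoppingTimeIn ℱ T (fun _ => T) :=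
    ⟨isStoppingTime_const ℱ T, fun ω => ⟨hT.le, le_rfl⟩⟩
  have hRT : ∀ ω, R ω ≤ (fun _ : Ω => T) ω := fun ω => (hR.2 ω).2
  -- arbitrarily large expected rewards with stopping times dominating `R` pointwise
  have hbig : ∀ M : ℝ, ∃ τ, MemTS ℱ μ T R τ ∧ (∀ ω, R ω ≤ τ ω) ∧
      Integrable (φ τ) μ ∧ M < ∫ ω, φ τ ω ∂μ := by
    intro M
    obtain ⟨b, hbA, hb⟩ := not_bddAbove_iff.1 hB (max M 0)
    obtain ⟨τ₀, hτ₀, rfl⟩ := hbA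
    obtain ⟨hmem, hge, hcong⟩ := vfr_max_mem hφ hR hτ₀
    have hb' : max M 0 < ∫ ω, φ τ₀ ω ∂μ := hb
    have hint : Integrable (φ τ₀) μ := by
      by_contra hni
      rw [integral_undef hni] at hb'
      exact absurd (le_max_right M 0) (not_le.2 hb')
    refine ⟨_, hmem, hge, hint.congr hcong.symm, ?_⟩
    rw [integral_congr_ae hcong]
    exact lt_of_le_of_lt (le_max_left M 0) hb'
  -- nonnegativity of the value function
  have hvnn : 0 ≤ᵐ[μ] v R := by
    have hmem0 : (μ[φ R|hR.1.measurableSpace]) ∈ valueSet ℱ μ T φ R hR.1 :=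
      ⟨R, vfr_TSet_nonempty hR, rfl⟩
    exact (condExp_nonneg (vfr_phi_nn hφ hR)).trans (hess.1 _ hmem0)
  -- key bound: mass of an admissible reward over `C i` is at most `i`
  have hkey : ∀ τ, MemTS ℱ μ T R τ → Integrable (φ τ) μ → ∀ i : ℕ,
      ∫ ω in C i, φ τ ω ∂μ ≤ (i : ℝ) := by
    intro τ hτ hint i
    have h1 : ∫ ω in C i, φ τ ω ∂μ = ∫ ω in C i, (μ[φ τ|hR.1.measurableSpace]) ω ∂μ :=
      (setIntegral_condExp (vfr_ms_le hR.1) hint (hCmeasR i)).symm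
    have hvint : IntegrableOn (v R) (C i) μ := by
      refine Measure.integrableOn_of_bounded (measure_ne_top μ _)
        ((hvmeas.mono (vfr_ms_le hR.1) le_rfl).aestronglyMeasurable) (M := (i : ℝ)) ?_
      refine (ae_restrict_iff' (hCmeas i)).2 ?_
      filter_upwards [hvnn] with ω h0 hω
      rw [Real.norm_of_nonneg h0]
      exact hω
    have h2 : ∫ ω in C i, (μ[φ τ|hR.1.measurableSpace]) ω ∂μ ≤ ∫ ω in C i, v R ω ∂μ :=
      setIntegral_mono_ae integrable_condExp.integrableOn hvint (hess.1 _ ⟨τ, hτ, rfl⟩)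
    have h3 : ∫ ω in C i, v R ω ∂μ ≤ (i : ℝ) := by
      have hb : ∫ ω in C i, v R ω ∂μ ≤ ∫ _ω in C i, (i : ℝ) ∂μ := by
        refine setIntegral_mono_ae_restrict hvint
          (integrableOn_const (measure_ne_top μ _)) ?_
        exact (ae_restrict_iff' (hCmeas i)).2 (ae_of_all _ fun ω hω => hω)
      have hc : ∫ _ω in C i, (i : ℝ) ∂μ = (μ (C i)).toReal * (i : ℝ) := by
        rw [setIntegral_const, smul_eq_mul, measureReal_def]
      have hμ1 : (μ (C i)).toReal ≤ 1 := by
        have := prob_le_one (μ := μ) (s := C i)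
        exact ENNReal.toReal_le_of_le_ofReal zero_le_one (by simpa using this)
      have hnn : (0:ℝ) ≤ (i : ℝ) := Nat.cast_nonneg i
      nlinarith [ENNReal.toReal_nonneg (a := μ (C i))]
    linarith
  -- tails of integrable rewards vanish
  have htail : ∀ f : Ω → ℝ, Integrable f μ →
      Tendsto (fun i : ℕ => ∫ ω in (C i)ᶜ, f ω ∂μ) atTop (nhds 0) := by
    intro f hint
    have hU : ⋃ i : ℕ, C i = Set.univ :=
      Set.eq_univ_of_forall fun ω => Set.mem_iUnion.2 (hCcov ω)
    have h1 : Tendsto (fun i : ℕ => ∫ ω in C i, f ω ∂μ) atTop (nhds (∫ ω, f ω ∂μ)) := by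
      have := tendsto_setIntegral_of_monotone (fun i : ℕ => hCmeas i)
        (fun i j hij => hCmono hij) (by rw [hU]; exact hint.integrableOn)
      rwa [hU, setIntegral_univ] at this
    have h2 : ∀ i : ℕ, ∫ ω in (C i)ᶜ, f ω ∂μ = ∫ ω, f ω ∂μ - ∫ ω in C i, f ω ∂μ := by
      intro i
      have := integral_add_compl (hCmeas i) hint
      linarith
    have h3 : Tendsto (fun i : ℕ => (∫ ω, f ω ∂μ) - ∫ ω in C i, f ω ∂μ) atTop
        (nhds ((∫ ω, f ω ∂μ) - ∫ ω, f ω ∂μ)) := tendsto_const_nhds.sub h1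
    rw [sub_self] at h3
    exact Tendsto.congr (fun i => (h2 i).symm) h3
  -- a first big reward
  obtain ⟨σ₁, hσ₁mem, hσ₁ge, hσ₁int, hσ₁big⟩ := hbig 0
  -- test sequence detecting integrability of the tail of the terminal reward
  set ξ' : ℕ → Ω → ℝ := fun i ω => if ω ∈ C i then σ₁ ω else T with hξ'def
  have hξ'STIn : ∀ i, IsStoppingTimeIn ℱ T (ξ' i) := fun i =>
    vfr_ite hR.1 hσ₁mem.1 hTst hσ₁ge hRT (hCmeasR i)
  have hξ'conv : ∀ᵐ ω ∂μ, Antitone (fun i => ξ' i ω) ∧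
      Tendsto (fun i => ξ' i ω) atTop (nhds (σ₁ ω)) := by
    refine ae_of_all _ fun ω => ⟨?_, ?_⟩
    · intro i j hij
      simp only [hξ'def]
      by_cases hi : ω ∈ C i
      · rw [if_pos hi, if_pos (hCmono hij hi)]
      · by_cases hj : ω ∈ C j
        · rw [if_pos hj, if_neg hi]
          exact (hσ₁mem.1.2 ω).2
        · rw [if_neg hi, if_neg hj]
    · obtain ⟨i₀, hi₀⟩ := hCcov ω
      refine tendsto_atTop_of_eventually_const (i₀ := i₀) fun i hi => ?_
      simp only [hξ'def]
      rw [if_pos (hCmono hi hi₀)]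
  have hξ'lim := hrce σ₁ ξ' hσ₁mem.1 hξ'STIn hξ'conv
  have hi₀ex : ∃ i : ℕ, IntegrableOn (φ (fun _ => T)) (C i)ᶜ μ := by
    by_contra hno
    push_neg at hno
    have hzero : ∀ i : ℕ, ∫ ω, φ (ξ' i) ω ∂μ = 0 := by
      intro i
      refine integral_undef fun hint' => hno i ?_
      have hcg : φ (ξ' i) =ᵐ[μ.restrict (C i)ᶜ] φ (fun _ => T) := by
        refine (ae_restrict_iff' (hCmeas i).compl).2 ?_
        filter_upwards [hφ.2 (ξ' i) (fun _ => T) (hξ'STIn i) hTst] with ω h hω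
        refine h ?_
        simp only [hξ'def]
        rw [if_neg (by simpa using hω)]
      exact (hint'.integrableOn.congr hcg)
    have h0 : Tendsto (fun i : ℕ => ∫ ω, φ (ξ' i) ω ∂μ) atTop (nhds 0) := by
      simpa [hzero] using tendsto_const_nhds (α := ℝ) (f := atTop (α := ℕ))
    have := tendsto_nhds_unique hξ'lim h0
    exact absurd this.symm (ne_of_lt hσ₁big)
  obtain ⟨i₀, hi₀int⟩ := hi₀ex
  -- recursive construction of annuli carrying large rewards
  have hstep : ∀ p : ℕ × ℕ, ∃ q : (Ω → ℝ) × ℕ, p.1 < q.2 ∧ MemTS ℱ μ T R q.1 ∧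
      (∀ ω, R ω ≤ q.1 ω) ∧ Integrable (φ q.1) μ ∧
      (p.2 : ℝ) ≤ ∫ ω in C q.2 \ C p.1, φ q.1 ω ∂μ := by
    rintro ⟨i, K⟩
    obtain ⟨τ, hτmem, hτge, hτint, hτbig⟩ := hbig ((i : ℝ) + K + 1)
    have hev : ∀ᶠ i' : ℕ in atTop, ∫ ω in (C i')ᶜ, φ τ ω ∂μ ≤ 1 :=
      (htail (φ τ) hτint).eventually_le_const zero_lt_one
    obtain ⟨i', hi'le, hi'gt⟩ := (hev.and (eventually_gt_atTop i)).exists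
    refine ⟨(τ, i'), hi'gt, hτmem, hτge, hτint, ?_⟩
    have hsplit : ∫ ω in (C i)ᶜ, φ τ ω ∂μ
        = ∫ ω in C i' \ C i, φ τ ω ∂μ + ∫ ω in (C i')ᶜ, φ τ ω ∂μ := by
      have hdecomp : (C i)ᶜ = (C i' \ C i) ∪ (C i')ᶜ := by
        ext ω
        simp only [Set.mem_compl_iff, Set.mem_union, Set.mem_diff]
        constructor
        · intro h
          by_cases hω : ω ∈ C i'
          · exact Or.inl ⟨hω, h⟩
          · exact Or.inr hω
        · rintro (⟨-, h⟩ | h)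
          · exact h
          · exact fun hc => h (hCmono hi'gt.le hc)
      rw [hdecomp]
      exact setIntegral_union (disjoint_compl_right.mono_left Set.diff_subset)
        (hCmeas i').compl hτint.integrableOn hτint.integrableOn
    have hcompl := integral_add_compl (hCmeas i) hτint
    have hk := hkey τ hτmem hτint i
    linarith
  choose stepf hstep1 hstep2 hstep3 hstep4 hstep5 using hstep
  obtain ⟨Irec, hI0, hIsucc⟩ : ∃ I : ℕ → ℕ, I 0 = i₀ ∧ ∀ j, I (j + 1) = (stepf (I j, j)).2 :=
    ⟨fun j => Nat.rec i₀ (fun j ij => (stepf (ij, j)).2) j, rfl, fun j => rfl⟩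
  set σ : ℕ → Ω → ℝ := fun j => (stepf (Irec j, j)).1 with hσdef
  have hI_lt : ∀ j, Irec j < Irec (j + 1) := fun j => by
    rw [hIsucc j]; exact hstep1 (Irec j, j)
  have hImono : StrictMono Irec := strictMono_nat_of_lt_succ hI_lt
  have hIge : ∀ j, i₀ ≤ Irec j := fun j => by
    rw [← hI0]; exact hImono.monotone (Nat.zero_le j)
  have hσmem : ∀ j, MemTS ℱ μ T R (σ j) := fun j => hstep2 _
  have hσge : ∀ j ω, R ω ≤ σ j ω := fun j => hstep3 _
  have hσint : ∀ j, Integrable (φ (σ j)) μ := fun j => hstep4 _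
  have hσmass : ∀ j : ℕ, (j : ℝ) ≤ ∫ ω in C (Irec (j + 1)) \ C (Irec j), φ (σ j) ω ∂μ := by
    intro j
    have := hstep5 (Irec j, j)
    rwa [← hIsucc j] at this
  -- assembling the limiting stopping time
  set Q : ℕ → Set Ω := fun j => C (Irec (j + 1)) with hQdef
  have hQmem : ∀ (j : ℕ) ω, ω ∈ Q j ↔ ω ∈ C (Irec (j + 1)) := fun j ω => by
    rw [hQdef]
  have hQmeas : ∀ j, MeasurableSet[hR.1.measurableSpace] (Q j) := fun j => by
    rw [hQdef]; exact hCmeasR _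
  have hQcov : ∀ ω, ∃ j, ω ∈ Q j := by
    intro ω
    obtain ⟨i, hi⟩ := hCcov ω
    exact ⟨i, (hQmem i ω).2
      (hCmono (le_trans (Nat.le_succ i) (hImono.le_apply : i + 1 ≤ Irec (i + 1))) hi)⟩
  set Jp : Ω → ℕ := fun ω => Nat.find (hQcov ω) with hJdef
  have hJ1 : ∀ ω, ω ∈ Q (Jp ω) := fun ω => Nat.find_spec (hQcov ω)
  have hJ2 : ∀ ω i, i < Jp ω → ω ∉ Q i := fun ω i hi => Nat.find_min (hQcov ω) hi
  set ξ : Ω → ℝ := fun ω => σ (Jp ω) ω with hξdef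
  have hξSTIn : IsStoppingTimeIn ℱ T ξ :=
    vfr_assembly hR.1 σ (fun j => (hσmem j).1) hσge Q hQmeas Jp hJ1 hJ2
  have hξge : ∀ ω, R ω ≤ ξ ω := fun ω => hσge _ ω
  set ρ : ℕ → Ω → ℝ := fun n ω => if ω ∈ C (Irec (n + 1)) then ξ ω else T with hρdef
  have hρSTIn : ∀ n, IsStoppingTimeIn ℱ T (ρ n) := fun n =>
    vfr_ite hR.1 hξSTIn hTst hξge hRT (hCmeasR _)
  have hρconv : ∀ᵐ ω ∂μ, Antitone (fun n => ρ n ω) ∧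
      Tendsto (fun n => ρ n ω) atTop (nhds (ξ ω)) := by
    refine ae_of_all _ fun ω => ⟨?_, ?_⟩
    · intro i j hij
      simp only [hρdef]
      by_cases hi : ω ∈ C (Irec (i + 1))
      · rw [if_pos hi, if_pos (hCmono (hImono.monotone (Nat.succ_le_succ hij)) hi)]
      · by_cases hj : ω ∈ C (Irec (j + 1))
        · rw [if_pos hj, if_neg hi]
          exact (hξSTIn.2 ω).2
        · rw [if_neg hi, if_neg hj]
    · refine tendsto_atTop_of_eventually_const (i₀ := Jp ω) fun n hn => ?_
      simp only [hρdef]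
      rw [if_pos (hCmono (hImono.monotone (Nat.succ_le_succ hn)) ((hQmem _ ω).1 (hJ1 ω)))]
  have hρlim := hrce ξ ρ hξSTIn hρSTIn hρconv
  -- measurability of the pieces
  have hJmeas : ∀ j, MeasurableSet {ω | Jp ω = j} := by
    intro j
    have hset : {ω | Jp ω = j} = Q j \ ⋃ i, ⋃ (_ : i < j), Q i := by
      ext ω
      simp only [Set.mem_setOf_eq, Set.mem_diff, Set.mem_iUnion]
      constructor
      · intro h
        refine ⟨h ▸ hJ1 ω, ?_⟩
        rintro ⟨i, hi, hQi⟩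
        exact hJ2 ω i (h ▸ hi) hQi
      · rintro ⟨hj, hnot⟩
        rcases lt_trichotomy (Jp ω) j with hlt | heq | hgt
        · exact absurd ⟨Jp ω, hlt, hJ1 ω⟩ hnot
        · exact heq
        · exact absurd hj (hJ2 ω j hgt)
    rw [hset, hQdef]
    exact (hCmeas _).diff
      (MeasurableSet.iUnion fun i => MeasurableSet.iUnion fun _ => hCmeas _)
  -- decomposition of the rewards of `ρ n`
  have hρdecomp : ∀ n, φ (ρ n) =ᵐ[μ]
      fun ω => (∑ j ∈ Finset.range (n + 1),
          Set.indicator {ω' | Jp ω' = j} (φ (σ j)) ω)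
        + Set.indicator (C (Irec (n + 1)))ᶜ (φ (fun _ => T)) ω := by
    intro n
    have hadm1 : ∀ᵐ ω ∂μ, ∀ j, ρ n ω = σ j ω → φ (ρ n) ω = φ (σ j) ω :=
      ae_all_iff.2 fun j => hφ.2 _ _ (hρSTIn n) (hσmem j).1
    filter_upwards [hadm1, hφ.2 (ρ n) (fun _ => T) (hρSTIn n) hTst] with ω h1 h2
    by_cases hω : ω ∈ C (Irec (n + 1))
    · have hJle : Jp ω ≤ n := Nat.find_min' _ ((hQmem n ω).2 hω)
      have hval : ρ n ω = σ (Jp ω) ω := by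
        simp only [hρdef]
        rw [if_pos hω]
      have heq := h1 (Jp ω) hval
      have hsum : (∑ j ∈ Finset.range (n + 1),
          Set.indicator {ω' | Jp ω' = j} (φ (σ j)) ω) = φ (σ (Jp ω)) ω := by
        rw [Finset.sum_eq_single (Jp ω)]
        · exact Set.indicator_of_mem (show ω ∈ {ω' | Jp ω' = Jp ω} from rfl) _
        · intro j _ hne
          exact Set.indicator_of_notMem (fun hmem => hne (by exact hmem.symm ▸ rfl)) _
        · intro hnotin
          exact absurd (Finset.mem_range.2 (Nat.lt_succ_of_le hJle)) hnotin
      rw [heq, hsum, Set.indicator_of_notMem (by simpa using hω), add_zero]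
    · have hval : ρ n ω = T := by
        simp only [hρdef]
        rw [if_neg hω]
      have heq := h2 hval
      have hsum : (∑ j ∈ Finset.range (n + 1),
          Set.indicator {ω' | Jp ω' = j} (φ (σ j)) ω) = 0 := by
        refine Finset.sum_eq_zero fun j hj => Set.indicator_of_notMem ?_ _
        intro hmem
        have hQj : ω ∈ C (Irec (j + 1)) := (hQmem j ω).1 (hmem ▸ hJ1 ω)
        exact hω (hCmono (hImono.monotone
          (Nat.succ_le_succ (Nat.lt_succ_iff.1 (Finset.mem_range.1 hj)))) hQj)
      rw [heq, hsum, zero_add, Set.indicator_of_mem (by simpa using hω)]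
  have hρint : ∀ n, Integrable (φ (ρ n)) μ := by
    intro n
    refine Integrable.congr (Integrable.add ?_ ?_) (hρdecomp n).symm
    · exact integrable_finset_sum _ fun j _ => (hσint j).indicator (hJmeas j)
    · rw [integrable_indicator_iff (hCmeas _).compl]
      exact hi₀int.mono_set (Set.compl_subset_compl.2 (hCmono (hIge (n + 1))))
  -- identification on the annuli
  have hJann : ∀ n ω, ω ∈ C (Irec (n + 1)) \ C (Irec n) → Jp ω = n := by
    rintro n ω ⟨h1, h2⟩
    refine le_antisymm (Nat.find_min' _ ((hQmem n ω).2 h1)) ?_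
    by_contra hlt
    push_neg at hlt
    exact h2 (hCmono (hImono.monotone (Nat.succ_le_of_lt hlt)) ((hQmem _ ω).1 (hJ1 ω)))
  -- lower bound on the approximating rewards
  have hlow : ∀ n : ℕ, (n : ℝ) ≤ ∫ ω, φ (ρ n) ω ∂μ := by
    intro n
    have hann_meas : MeasurableSet (C (Irec (n + 1)) \ C (Irec n)) :=
      (hCmeas _).diff (hCmeas _)
    refine le_trans (hσmass n) ?_
    rw [← integral_indicator hann_meas]
    refine integral_mono_ae ((hσint n).indicator hann_meas) (hρint n) ?_
    filter_upwards [hφ.2 (ρ n) (σ n) (hρSTIn n) (hσmem n).1] with ω h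
    by_cases hω : ω ∈ C (Irec (n + 1)) \ C (Irec n)
    · rw [Set.indicator_of_mem hω]
      have hval : ρ n ω = σ n ω := by
        simp only [hρdef]
        rw [if_pos hω.1]
        simp only [hξdef]
        rw [hJann n ω hω]
      exact (h hval).ge
    · rw [Set.indicator_of_notMem hω]
      exact (hφ.1 _ (hρSTIn n)).2 ω
  -- contradiction with the RCE limit
  obtain ⟨N, hN⟩ := exists_nat_ge ((∫ ω, φ ξ ω ∂μ) + 1)
  have hev := hρlim.eventually_lt_const (lt_add_one (∫ ω, φ ξ ω ∂μ))
  obtain ⟨n, hn1, hn2⟩ := (hev.and (eventually_ge_atTop N)).exists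
  have hlt : (n : ℝ) < (∫ ω, φ ξ ω ∂μ) + 1 := lt_of_le_of_lt (hlow n) hn1
  have hge : ((∫ ω, φ ξ ω ∂μ) + 1) ≤ (n : ℝ) := le_trans hN (Nat.cast_le.2 hn2)
  linarith


/-- The expectation of the value function is the supremum of the expected rewards. -/
lemma vfr_v_integral [IsProbabilityMeasure μ] (hT : 0 < T) (hφ : Admissible ℱ μ T φ)
    (hrce : RCEFam ℱ μ T φ) (hv : IsValueFam ℱ μ T φ v) {R : Ω → ℝ}
    (hR : IsStoppingTimeIn ℱ T R) :
    Integrable (v R) μ ∧ ∫ ω, v R ω ∂μ = sSup (ASet ℱ μ T φ R) := by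
  have himg := vfr_image_valueSet hφ hR
  have hB : BddAbove ((fun f => ∫ ω, f ω ∂μ) '' valueSet ℱ μ T φ R hR.1) := by
    rw [himg]
    exact vfr_bddAbove hT hφ hrce hv hR
  have h := isEssSupOf_integral_sSup (hv R hR).2
    (((hv R hR).1.mono (vfr_ms_le hR.1) le_rfl).aestronglyMeasurable)
    ⟨_, ⟨R, vfr_TSet_nonempty hR, rfl⟩⟩
    (fun f hf => (vfr_member hφ hR hf).1)
    (fun f hf => (vfr_member hφ hR hf).2.1)
    (vfr_directed hφ hR) hB
  rwa [himg] at h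


end VFRAux

/-- **Proposition 1.5.** If the admissible reward family `φ` is RCE, then the value
function family is RCE. -/
theorem valueFunction_RCE {m : MeasurableSpace Ω}
    (ℱ : Filtration ℝ m) (μ : Measure Ω) [IsProbabilityMeasure μ]
    (T : ℝ) (hT : 0 < T)
    (φ : (Ω → ℝ) → Ω → ℝ) (hφ : Admissible ℱ μ T φ) (hrce : RCEFam ℱ μ T φ)
    (v : (Ω → ℝ) → Ω → ℝ) (hv : IsValueFam ℱ μ T φ v) :
    RCEFam ℱ μ T v := by
  intro θ θn hθ hθn hconv
  have hθnle : ∀ n, ∀ᵐ ω ∂μ, θ ω ≤ θn n ω := by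
    intro n
    filter_upwards [hconv] with ω h
    exact le_of_tendsto h.2 (eventually_atTop.2 ⟨n, fun k hk => h.1 hk⟩)
  have hTS : ∀ n, TSet ℱ μ T (θn n) ⊆ TSet ℱ μ T θ := by
    intro n τ hτ
    refine ⟨hτ.1, ?_⟩
    filter_upwards [hτ.2, hθnle n] with ω h1 h2
    exact le_trans h2 h1
  have hA : ∀ n, ASet ℱ μ T φ (θn n) ⊆ ASet ℱ μ T φ θ := fun n =>
    Set.image_mono (hTS n)
  have hint_n := fun n => vfr_v_integral hT hφ hrce hv (hθn n)
  have hint := vfr_v_integral hT hφ hrce hv hθ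
  have hBθ := vfr_bddAbove hT hφ hrce hv hθ
  have hBn := fun n => vfr_bddAbove hT hφ hrce hv (hθn n)
  have hne_n : ∀ n, (ASet ℱ μ T φ (θn n)).Nonempty := fun n =>
    ⟨_, ⟨θn n, vfr_TSet_nonempty (hθn n), rfl⟩⟩
  rw [hint.2]
  refine (tendsto_congr fun n => ((hint_n n).2 : _)).2 ?_
  refine tendsto_order.2 ⟨?_, ?_⟩
  · intro b hb
    obtain ⟨x, hx_mem, hbx⟩ :=
      exists_lt_of_lt_csSup (⟨_, ⟨θ, vfr_TSet_nonempty hθ, rfl⟩⟩ :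
        (ASet ℱ μ T φ θ).Nonempty) hb
    obtain ⟨τ, hτ, rfl⟩ := hx_mem
    set s' : ℕ → Ω → ℝ := fun n ω => max (τ ω) (θn n ω) with hs'def
    have hs'STIn : ∀ n, IsStoppingTimeIn ℱ T (s' n) := fun n =>
      ⟨vfr_st_max hτ.1.1 (hθn n).1, fun ω => ⟨le_trans (hτ.1.2 ω).1 (le_max_left _ _),
        max_le (hτ.1.2 ω).2 ((hθn n).2 ω).2⟩⟩
    have hs'conv : ∀ᵐ ω ∂μ, Antitone (fun n => s' n ω) ∧
        Tendsto (fun n => s' n ω) atTop (nhds (τ ω)) := by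
      filter_upwards [hconv, hτ.2] with ω h hτω
      constructor
      · intro i j hij
        simp only [hs'def]
        exact max_le_max le_rfl (h.1 hij)
      · have h2 : Tendsto (fun n => max (τ ω) (θn n ω)) atTop (nhds (max (τ ω) (θ ω))) :=
          tendsto_const_nhds.max h.2
        rw [max_eq_left hτω] at h2
        exact h2
    have hlim := hrce τ s' hτ.1 hs'STIn hs'conv
    have hb' : b < ∫ ω, φ τ ω ∂μ := hbx
    have hev := hlim.eventually_const_lt hb'
    refine hev.mono fun n hn => lt_of_lt_of_le hn ?_
    exact le_csSup (hBn n) ⟨s' n, ⟨hs'STIn n, ae_of_all _ fun ω => le_max_right _ _⟩, rfl⟩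
  · intro b hb
    exact Filter.Eventually.of_forall fun n =>
      lt_of_le_of_lt (csSup_le_csSup hBθ (hne_n n) (hA n)) hb
end

section
/- Under the hypotheses ensuring existence of minimal optimal stopping times, the map S ↦ θ*(S) is left-continuous along stopping times: if S_n ↑ S a.s., then θ*(S_n) ↑ θ*(S) a.s., where θ*(S) = ess inf{θ ∈ T_S : v(θ) = φ(θ) a.s.}. -/
open MeasureTheory Filter ENNReal

variable {Ω : Type*}

section Aux
variable {m : MeasurableSpace Ω} {ℱ : Filtration ℝ m} {μ : Measure Ω} {T : ℝ}
  {φ : (Ω → ℝ) → Ω → ℝ}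

private lemma integrable_phi_aux (hφ : Admissible ℱ μ T φ)
    (hbdd : BddReward ℱ μ T φ) {θ : Ω → ℝ} (hθ : IsStoppingTimeIn ℱ T θ) :
    Integrable (φ θ) μ := by
  have hmeas : Measurable[hθ.1.measurableSpace] (φ θ) := (hφ.1 θ hθ).1
  have hm : Measurable (φ θ) := hmeas.mono hθ.1.measurableSpace_le le_rfl
  refine ⟨hm.aestronglyMeasurable, ?_⟩
  have hnn := (hφ.1 θ hθ).2
  have : ∀ ω, (‖φ θ ω‖₊ : ℝ≥0∞) = ENNReal.ofReal (φ θ ω) := fun ω =>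
    Real.enorm_eq_ofReal (hnn ω)
  unfold HasFiniteIntegral
  calc ∫⁻ ω, (‖φ θ ω‖₊ : ℝ≥0∞) ∂μ = ∫⁻ ω, ENNReal.ofReal (φ θ ω) ∂μ := by
        exact lintegral_congr fun ω => this ω
    _ ≤ ⨆ θ' : {θ' : Ω → ℝ // IsStoppingTimeIn ℱ T θ'},
          ∫⁻ ω, ENNReal.ofReal (φ θ'.1 ω) ∂μ := le_iSup
            (fun θ' : {θ' : Ω → ℝ // IsStoppingTimeIn ℱ T θ'} =>
              ∫⁻ ω, ENNReal.ofReal (φ θ'.1 ω) ∂μ) ⟨θ, hθ⟩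
    _ < ⊤ := hbdd

private lemma thetastar_mono_aux {v : (Ω → ℝ) → Ω → ℝ} {θstar : (Ω → ℝ) → Ω → ℝ}
    (hθstar : ∀ S (hS : IsStoppingTimeIn ℱ T S),
      MemTS ℱ μ T S (θstar S) ∧
      (∀ θ, MemTS ℱ μ T S θ → v θ =ᵐ[μ] φ θ → θstar S ≤ᵐ[μ] θ) ∧
      (∀ g : Ω → ℝ, (∀ θ, MemTS ℱ μ T S θ → v θ =ᵐ[μ] φ θ → g ≤ᵐ[μ] θ) →
        g ≤ᵐ[μ] θstar S) ∧
      v S =ᵐ[μ] μ[φ (θstar S) | hS.1.measurableSpace])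
    {S1 S2 : Ω → ℝ} (h1 : IsStoppingTimeIn ℱ T S1) (h2 : IsStoppingTimeIn ℱ T S2)
    (h12 : ∀ᵐ ω ∂μ, S1 ω ≤ S2 ω) : θstar S1 ≤ᵐ[μ] θstar S2 := by
  refine (hθstar S2 h2).2.2.1 (θstar S1) ?_
  intro θ hθ hvφ
  refine (hθstar S1 h1).2.1 θ ⟨hθ.1, ?_⟩ hvφ
  filter_upwards [h12, hθ.2] with ω a b
  linarith

end Aux

/-- **Remark 1.7.** The map `S ↦ θ*(S)` of minimal optimal stopping times is
left-continuous along stopping times: if `S_n ↑ S` a.s. then `θ*(S_n) ↑ θ*(S)` a.s. -/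
theorem minimal_optimal_left_continuous {m : MeasurableSpace Ω}
    (ℱ : Filtration ℝ m) (μ : Measure Ω) [IsProbabilityMeasure μ]
    (T : ℝ) (hT : 0 < T) (hF0 : TrivialF0 ℱ μ)
    (φ : (Ω → ℝ) → Ω → ℝ) (hφ : Admissible ℱ μ T φ)
    (hrce : RCEFam ℱ μ T φ) (hlce : LCEFam ℱ μ T φ)
    (hbdd : BddReward ℱ μ T φ)
    (v : (Ω → ℝ) → Ω → ℝ) (hv : IsValueFam ℱ μ T φ v)
    (θstar : (Ω → ℝ) → Ω → ℝ)
    -- for each `S`, `θstar S` is the essential infimum of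
    -- `{θ ∈ T_S : v(θ) = φ(θ) a.s.}` and is optimal for `v(S)`
    (hθstar : ∀ S (hS : IsStoppingTimeIn ℱ T S),
      MemTS ℱ μ T S (θstar S) ∧
      (∀ θ, MemTS ℱ μ T S θ → v θ =ᵐ[μ] φ θ → θstar S ≤ᵐ[μ] θ) ∧
      (∀ g : Ω → ℝ, (∀ θ, MemTS ℱ μ T S θ → v θ =ᵐ[μ] φ θ → g ≤ᵐ[μ] θ) →
        g ≤ᵐ[μ] θstar S) ∧
      v S =ᵐ[μ] μ[φ (θstar S) | hS.1.measurableSpace]) :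
    ∀ S (Sn : ℕ → Ω → ℝ), IsStoppingTimeIn ℱ T S →
      (∀ n, IsStoppingTimeIn ℱ T (Sn n)) →
      (∀ᵐ ω ∂μ, Monotone (fun n => Sn n ω) ∧
        Tendsto (fun n => Sn n ω) atTop (nhds (S ω))) →
      ∀ᵐ ω ∂μ, Monotone (fun n => θstar (Sn n) ω) ∧
        Tendsto (fun n => θstar (Sn n) ω) atTop (nhds (θstar S ω)) := by
  intro S Sn hS hSn hconv
  classical
  set τ : ℕ → Ω → ℝ := fun n => θstar (Sn n) with hτdef
  have hτ : ∀ n, MemTS ℱ μ T (Sn n) (τ n) := fun n => (hθstar (Sn n) (hSn n)).1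
  have hτT : ∀ n, IsStoppingTimeIn ℱ T (τ n) := fun n => (hτ n).1
  -- Sₙ ≤ S a.e.
  have hSnS : ∀ᵐ ω ∂μ, ∀ n, Sn n ω ≤ S ω := by
    filter_upwards [hconv] with ω hω n
    exact hω.1.ge_of_tendsto hω.2 n
  -- θ*(Sₙ) is a.e. nondecreasing in n, and below θ*(S)
  have hmono_step : ∀ n, τ n ≤ᵐ[μ] τ (n + 1) := by
    intro n
    refine thetastar_mono_aux hθstar (hSn n) (hSn (n + 1)) ?_
    filter_upwards [hconv] with ω hω
    exact hω.1 (Nat.le_succ n)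
  have hτS : ∀ n, τ n ≤ᵐ[μ] θstar S := by
    intro n
    refine thetastar_mono_aux hθstar (hSn n) hS ?_
    filter_upwards [hSnS] with ω hω
    exact hω n
  -- the candidate limit
  set θh : Ω → ℝ := fun ω => ⨆ n, τ n ω with hθhdef
  have hbdda : ∀ ω, BddAbove (Set.range fun n => τ n ω) := fun ω =>
    ⟨T, by rintro x ⟨n, rfl⟩; exact ((hτT n).2 ω).2⟩
  have hleθh : ∀ n ω, τ n ω ≤ θh ω := fun n ω => le_ciSup (hbdda ω) n
  have hθhT : IsStoppingTimeIn ℱ T θh := by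
    constructor
    · intro t
      show MeasurableSet[ℱ t] {ω | ((θh ω : ℝ) : WithTop ℝ) ≤ (t : WithTop ℝ)}
      have hset : {ω | ((θh ω : ℝ) : WithTop ℝ) ≤ (t : WithTop ℝ)} =
          ⋂ n, {ω | ((τ n ω : ℝ) : WithTop ℝ) ≤ (t : WithTop ℝ)} := by
        ext ω
        simp only [Set.mem_iInter, Set.mem_setOf_eq, hθhdef, WithTop.coe_le_coe]
        exact ciSup_le_iff (hbdda ω)
      rw [hset]
      exact MeasurableSet.iInter fun n => (hτT n).1 t
    · intro ω
      exact ⟨((hτT 0).2 ω).1.trans (hleθh 0 ω), ciSup_le fun n => ((hτT n).2 ω).2⟩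
  have hSθh : ∀ᵐ ω ∂μ, S ω ≤ θh ω := by
    filter_upwards [hconv, ae_all_iff.2 fun n => (hτ n).2] with ω hω hle
    exact le_of_tendsto hω.2 (Filter.Eventually.of_forall fun n =>
      (hle n).trans (hleθh n ω))
  have hθhmem : MemTS ℱ μ T S θh := ⟨hθhT, hSθh⟩
  -- a.e. monotone convergence of τ to θh
  have hmonoae : ∀ᵐ ω ∂μ, Monotone fun n => τ n ω := by
    filter_upwards [ae_all_iff.2 hmono_step] with ω h
    exact monotone_nat_of_le_succ h
  have htconv : ∀ᵐ ω ∂μ, Monotone (fun n => τ n ω) ∧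
      Tendsto (fun n => τ n ω) atTop (nhds (θh ω)) := by
    filter_upwards [hmonoae] with ω h
    exact ⟨h, tendsto_atTop_ciSup h (hbdda ω)⟩
  -- integrability facts
  have hφθh_int : Integrable (φ θh) μ := integrable_phi_aux hφ hbdd hθhT
  set σ : Ω → ℝ := θstar θh with hσdef
  have hσmem : MemTS ℱ μ T θh σ := (hθstar θh hθhT).1
  have hφσ_int : Integrable (φ σ) μ := integrable_phi_aux hφ hbdd hσmem.1
  have hvθh : v θh =ᵐ[μ] μ[φ σ | hθhT.1.measurableSpace] := (hθstar θh hθhT).2.2.2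
  have hvθh_int : Integrable (v θh) μ := integrable_condExp.congr hvθh.symm
  -- ∫ v(Sₙ) = ∫ φ(θ*(Sₙ))
  have hintv : ∀ n, ∫ ω, v (Sn n) ω ∂μ = ∫ ω, φ (τ n) ω ∂μ := by
    intro n
    rw [integral_congr_ae ((hθstar (Sn n) (hSn n)).2.2.2)]
    exact integral_condExp (hSn n).1.measurableSpace_le
  have hvSn_int : ∀ n, Integrable (v (Sn n)) μ := fun n =>
    integrable_condExp.congr ((hθstar (Sn n) (hSn n)).2.2.2).symm
  -- σ ∈ T_{Sₙ}, hence E[φ σ | F_{Sₙ}] ≤ v(Sₙ) a.e.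
  have hσmemSn : ∀ n, MemTS ℱ μ T (Sn n) σ := by
    intro n
    refine ⟨hσmem.1, ?_⟩
    filter_upwards [(hτ n).2, hσmem.2] with ω h1 h2
    exact h1.trans ((hleθh n ω).trans h2)
  have hdom : ∀ n, μ[φ σ | (hSn n).1.measurableSpace] ≤ᵐ[μ] v (Sn n) := fun n =>
    (hv (Sn n) (hSn n)).2.1 _ ⟨σ, hσmemSn n, rfl⟩
  have hintvθh : ∫ ω, v θh ω ∂μ = ∫ ω, φ σ ω ∂μ := by
    rw [integral_congr_ae hvθh]
    exact integral_condExp hθhT.1.measurableSpace_le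
  -- ∫ v(θh) ≤ ∫ φ(θ*(Sₙ)) for each n
  have hge : ∀ n, ∫ ω, v θh ω ∂μ ≤ ∫ ω, φ (τ n) ω ∂μ := by
    intro n
    rw [hintvθh, ← hintv n,
      ← integral_condExp (μ := μ) (f := φ σ) (hSn n).1.measurableSpace_le]
    exact integral_mono_ae integrable_condExp (hvSn_int n) (hdom n)
  -- LCE gives convergence of expectations
  have hlim : Tendsto (fun n => ∫ ω, φ (τ n) ω ∂μ) atTop
      (nhds (∫ ω, φ θh ω ∂μ)) := hlce θh τ hθhT hτT htconv
  have h1 : ∫ ω, v θh ω ∂μ ≤ ∫ ω, φ θh ω ∂μ :=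
    ge_of_tendsto hlim (Filter.Eventually.of_forall hge)
  -- φ(θh) ≤ v(θh) a.e.
  have hφm : StronglyMeasurable[hθhT.1.measurableSpace] (φ θh) :=
    ((hφ.1 θh hθhT).1).stronglyMeasurable
  have hφle : φ θh ≤ᵐ[μ] v θh := by
    have hmem : MemTS ℱ μ T θh θh := ⟨hθhT, Filter.Eventually.of_forall fun ω => le_rfl⟩
    have := (hv θh hθhT).2.1 _ ⟨θh, hmem, rfl⟩
    rwa [condExp_of_stronglyMeasurable hθhT.1.measurableSpace_le hφm hφθh_int] at this
  -- hence equality a.e.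
  have hint_eq : ∫ ω, v θh ω ∂μ = ∫ ω, φ θh ω ∂μ :=
    le_antisymm h1 (integral_mono_ae hφθh_int hvθh_int hφle)
  have heq : v θh =ᵐ[μ] φ θh := by
    have hsub : Integrable (fun ω => v θh ω - φ θh ω) μ := hvθh_int.sub hφθh_int
    have h0 : ∫ ω, (v θh ω - φ θh ω) ∂μ = 0 := by
      rw [integral_sub hvθh_int hφθh_int, hint_eq, sub_self]
    have hnn : 0 ≤ᵐ[μ] fun ω => v θh ω - φ θh ω := by
      filter_upwards [hφle] with ω h
      simpa using h
    have := (integral_eq_zero_iff_of_nonneg_ae hnn hsub).1 h0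
    filter_upwards [this] with ω h
    have : v θh ω - φ θh ω = 0 := h
    linarith
  -- θ*(S) ≤ θh a.e. by minimality, and θh ≤ θ*(S) a.e.
  have hminle : θstar S ≤ᵐ[μ] θh := (hθstar S hS).2.1 θh hθhmem heq
  have hlemin : ∀ᵐ ω ∂μ, θh ω ≤ θstar S ω := by
    filter_upwards [ae_all_iff.2 hτS] with ω h
    exact ciSup_le h
  filter_upwards [htconv, hminle, hlemin] with ω hω ha hb
  refine ⟨hω.1, ?_⟩
  have hθeq : θh ω = θstar S ω := le_antisymm hb ha
  rw [← hθeq]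
  exact hω.2
end
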